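/- arXiv:1410.0415 — 5 statements merged into one kernel-verified Lean document; each statement's English description precedes it below -/
import Mathlib

section
/- Let p be a prime, μ the Haar probability measure on Z_p, and j a natural number. Then ∫_{{y ∈ Z_p : p^{−j} ≤ |y|_p}} |y|_p^{−1} dμ(y) = (j+1)(p−1)/p. -/
open MeasureTheory

-- measure of ball
lemma pball_meas (p : ℕ) [Fact p.Prime]
    [MeasurableSpace ℤ_[p]] [BorelSpace ℤ_[p]]
    (μ : Measure ℤ_[p]) [μ.IsAddHaarMeasure] (hμ : μ Set.univ = 1) (i : ℕ) :
    μ {y : ℤ_[p] | ‖y‖ ≤ (p : ℝ) ^ (-(i : ℤ))} = ((p : ENNReal) ^ i)⁻¹ := by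
  classical
  set B : Set ℤ_[p] := {y : ℤ_[p] | ‖y‖ ≤ (p : ℝ) ^ (-(i : ℤ))} with hBdef
  have hB : MeasurableSet B := (isClosed_le continuous_norm continuous_const).measurableSet
  set f := (PadicInt.toZModPow i : ℤ_[p] →+* ZMod (p ^ i)) with hf
  have hmem : ∀ y : ℤ_[p], y ∈ B ↔ f y = 0 := by
    intro y
    rw [hBdef, Set.mem_setOf_eq, PadicInt.norm_le_pow_iff_mem_span_pow,
      ← PadicInt.ker_toZModPow]
    exact Iff.rfl
  have key : ∀ c : ZMod (p ^ i), f ⁻¹' {c} = (fun y => -((c.val : ℤ_[p])) + y) ⁻¹' B := by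
    intro c
    have hx : f ((c.val : ℤ_[p])) = c := by
      rw [hf, map_natCast, ZMod.natCast_val, ZMod.cast_id]
    ext y
    simp only [Set.mem_preimage, Set.mem_singleton_iff, hmem, map_add, map_neg, hx]
    rw [neg_add_eq_zero, eq_comm]
  haveI : NeZero (p ^ i) := ⟨pow_ne_zero i (Nat.Prime.ne_zero Fact.out)⟩
  have hfib_meas : ∀ c : ZMod (p ^ i), MeasurableSet (f ⁻¹' {c}) := by
    intro c; rw [key]; exact hB.preimage (measurable_const_add _)
  have hfib_measure : ∀ c : ZMod (p ^ i), μ (f ⁻¹' {c}) = μ B := by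
    intro c; rw [key]; exact measure_preimage_add μ _ B
  have hdisj : Pairwise (Function.onFun Disjoint fun c : ZMod (p ^ i) => f ⁻¹' {c}) := by
    intro c c' hcc'
    exact Set.disjoint_left.mpr fun y hy hy' => hcc' (hy.symm.trans hy')
  have hunion : (⋃ c : ZMod (p ^ i), f ⁻¹' {c}) = Set.univ :=
    Set.eq_univ_of_forall fun y => Set.mem_iUnion.mpr ⟨f y, rfl⟩
  have h1 : (p : ENNReal) ^ i * μ B = 1 := by
    rw [← hμ, ← hunion, measure_iUnion hdisj hfib_meas, tsum_fintype]
    simp only [hfib_measure, Finset.sum_const, Finset.card_univ, ZMod.card, nsmul_eq_mul,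
      Nat.cast_pow]
  exact ENNReal.eq_inv_of_mul_eq_one_left (by rw [mul_comm]; exact h1)

lemma psphere_meas (p : ℕ) [Fact p.Prime]
    [MeasurableSpace ℤ_[p]] [BorelSpace ℤ_[p]]
    (μ : Measure ℤ_[p]) [μ.IsAddHaarMeasure] (hμ : μ Set.univ = 1) (i : ℕ) :
    μ {y : ℤ_[p] | ‖y‖ = (p : ℝ) ^ (-(i : ℤ))} =
      ((p : ENNReal) ^ i)⁻¹ - ((p : ENNReal) ^ (i + 1))⁻¹ := by
  have hp1 : (1 : ℝ) < (p : ℝ) := Nat.one_lt_cast.mpr (Fact.out : p.Prime).one_lt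
  have hcast : (-((i : ℤ) + 1)) = -(((i + 1 : ℕ) : ℤ)) := by push_cast; ring
  have hsplit : {y : ℤ_[p] | ‖y‖ ≤ (p : ℝ) ^ (-(i : ℤ))} =
      {y : ℤ_[p] | ‖y‖ = (p : ℝ) ^ (-(i : ℤ))} ∪
        {y : ℤ_[p] | ‖y‖ ≤ (p : ℝ) ^ (-((i + 1 : ℕ) : ℤ))} := by
    ext y
    simp only [Set.mem_setOf_eq, Set.mem_union]
    constructor
    · intro h
      rcases eq_or_lt_of_le h with h' | h'
      · exact Or.inl h'
      · right
        have := (PadicInt.norm_lt_pow_iff_norm_le_pow_sub_one y (-(i : ℤ))).mp h'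
        rwa [show (-(i : ℤ) - 1) = -(((i + 1 : ℕ) : ℤ)) by push_cast; ring] at this
    · rintro (h | h)
      · exact le_of_eq h
      · refine h.trans (zpow_le_zpow_right₀ (le_of_lt hp1) ?_)
        push_cast; omega
  have hdisj : Disjoint {y : ℤ_[p] | ‖y‖ = (p : ℝ) ^ (-(i : ℤ))}
      {y : ℤ_[p] | ‖y‖ ≤ (p : ℝ) ^ (-((i + 1 : ℕ) : ℤ))} := by
    rw [Set.disjoint_left]
    intro y hy hy'
    simp only [Set.mem_setOf_eq] at hy hy'
    rw [hy] at hy'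
    have : (-((i : ℤ) + 1)) < -(i : ℤ) := by omega
    have := (zpow_lt_zpow_right₀ hp1 (show -(((i+1:ℕ)):ℤ) < -(i:ℤ) by push_cast; omega)).trans_le hy'
    exact lt_irrefl _ this
  have hBmeas : MeasurableSet {y : ℤ_[p] | ‖y‖ ≤ (p : ℝ) ^ (-((i + 1 : ℕ) : ℤ))} :=
    (isClosed_le continuous_norm continuous_const).measurableSet
  have hSmeas : MeasurableSet {y : ℤ_[p] | ‖y‖ = (p : ℝ) ^ (-(i : ℤ))} :=
    (isClosed_eq continuous_norm continuous_const).measurableSet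
  have h := pball_meas p μ hμ i
  rw [hsplit, measure_union hdisj hBmeas, pball_meas p μ hμ (i + 1)] at h
  exact (ENNReal.sub_eq_of_eq_add (by simp [pow_ne_zero, (Fact.out : p.Prime).ne_zero]) h.symm).symm

/-- For a prime `p`, a Haar probability measure `μ` on `ℤ_p` and `j : ℕ`,
`∫_{{y ∈ ℤ_p : p^{−j} ≤ |y|}} |y|⁻¹ dμ(y) = (j+1)(p−1)/p`. -/
theorem stmt_4 (p : ℕ) [Fact p.Prime]
    [MeasurableSpace ℤ_[p]] [BorelSpace ℤ_[p]]
    (μ : Measure ℤ_[p]) [μ.IsAddHaarMeasure] (hμ : μ Set.univ = 1) (j : ℕ) :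
    ∫ y in {y : ℤ_[p] | (p : ℝ) ^ (-(j : ℤ)) ≤ ‖y‖}, ‖y‖⁻¹ ∂μ =
      ((j : ℝ) + 1) * ((p : ℝ) - 1) / p := by
  classical
  haveI : IsFiniteMeasure μ := ⟨by rw [hμ]; exact ENNReal.one_lt_top⟩
  have hp1 : (1 : ℝ) < (p : ℝ) := Nat.one_lt_cast.mpr (Fact.out : p.Prime).one_lt
  have hp0 : (0 : ℝ) < (p : ℝ) := lt_trans one_pos hp1
  set S : ℕ → Set ℤ_[p] := fun i => {y : ℤ_[p] | ‖y‖ = (p : ℝ) ^ (-(i : ℤ))} with hS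
  have hSmeas : ∀ i, MeasurableSet (S i) := fun i =>
    (isClosed_eq continuous_norm continuous_const).measurableSet
  have hA : {y : ℤ_[p] | (p : ℝ) ^ (-(j : ℤ)) ≤ ‖y‖} = ⋃ i ∈ Finset.range (j + 1), S i := by
    ext y
    simp only [Set.mem_setOf_eq, Set.mem_iUnion, Finset.mem_range, exists_prop, hS]
    constructor
    · intro h
      have hy0 : y ≠ 0 := by
        intro h0
        rw [h0, norm_zero] at h
        exact absurd h (not_le.mpr (zpow_pos hp0 _))
      have hval := PadicInt.norm_eq_zpow_neg_valuation hy0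
      have hvnn : (0 : ℤ) ≤ (y.valuation : ℤ) := Nat.cast_nonneg _
      rw [hval] at h
      have hle : -(j : ℤ) ≤ -y.valuation := (zpow_le_zpow_iff_right₀ hp1).mp h
      refine ⟨y.valuation, ?_, ?_⟩
      · omega
      · exact hval
    · rintro ⟨i, hi, hyi⟩
      rw [hyi]
      exact zpow_le_zpow_right₀ (le_of_lt hp1) (by omega)
  have hSdisj : (↑(Finset.range (j + 1)) : Set ℕ).Pairwise (Function.onFun Disjoint S) := by
    intro i _ k _ hik
    rw [Function.onFun, Set.disjoint_left]
    intro y hy hy'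
    simp only [hS, Set.mem_setOf_eq] at hy hy'
    rw [hy] at hy'
    have h2 := zpow_right_injective₀ hp0 (ne_of_gt hp1) hy'
    omega
  have hpE : ((p : ENNReal)) ≠ 0 := by
    exact_mod_cast (Fact.out : p.Prime).ne_zero
  have hfin : ∀ i : ℕ, ((p : ENNReal) ^ i)⁻¹ ≠ ⊤ :=
    fun i => ENNReal.inv_ne_top.mpr (pow_ne_zero i hpE)
  have hone : (1 : ENNReal) ≤ (p : ENNReal) := by
    exact_mod_cast (Fact.out : p.Prime).one_lt.le
  have hSmeasure : ∀ i : ℕ, (μ (S i)).toReal = ((p : ℝ) ^ i)⁻¹ - ((p : ℝ) ^ (i + 1))⁻¹ := by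
    intro i
    have hle : ((p : ENNReal) ^ (i + 1))⁻¹ ≤ ((p : ENNReal) ^ i)⁻¹ :=
      ENNReal.inv_le_inv.mpr (pow_le_pow_right₀ hone (by omega))
    rw [hS, psphere_meas p μ hμ i, ENNReal.toReal_sub_of_le hle (hfin i)]
    simp [ENNReal.toReal_inv, ENNReal.toReal_pow]
  have heq : ∀ i : ℕ, Set.EqOn (fun _ : ℤ_[p] => ((p : ℝ) ^ i)) (fun y => ‖y‖⁻¹) (S i) := by
    intro i y hy
    simp only [hS, Set.mem_setOf_eq] at hy
    simp only [hy, ← zpow_neg, neg_neg, zpow_natCast]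
  have hint : ∀ i ∈ Finset.range (j + 1), IntegrableOn (fun y : ℤ_[p] => ‖y‖⁻¹) (S i) μ :=
    fun i _ => (integrableOn_const (measure_ne_top μ _)).congr_fun
      (heq i) (hSmeas i)
  rw [hA, integral_biUnion_finset _ (fun i _ => hSmeas i) hSdisj hint]
  have hterm : ∀ i ∈ Finset.range (j + 1),
      ∫ y in S i, ‖y‖⁻¹ ∂μ = ((p : ℝ) - 1) / p := by
    intro i _
    rw [← setIntegral_congr_fun (hSmeas i) (heq i), setIntegral_const, Measure.real_def, hSmeasure i,
      smul_eq_mul]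
    have hp0' : (p : ℝ) ≠ 0 := ne_of_gt hp0
    field_simp
    ring
  rw [Finset.sum_congr rfl hterm, Finset.sum_const, Finset.card_range, nsmul_eq_mul]
  push_cast
  ring
end

section
/- Let p be an odd prime and μ the Haar probability measure on Z_p. Then the double integral ∫_{x ∈ Z_p} ( ∫_{{y ∈ Z_p : |1 − x²|_p ≤ |y|_p}} |y|_p^{−1} dμ(y) ) dμ(x) equals 1 + p^{−1}. -/
open MeasureTheory ENNReal Pointwise

section Aux

variable (p : ℕ) [Fact p.Prime] [MeasurableSpace ℤ_[p]] [BorelSpace ℤ_[p]]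
variable (μ : Measure ℤ_[p]) [μ.IsAddHaarMeasure]

def Bn (n : ℕ) : Set ℤ_[p] := {y : ℤ_[p] | ‖y‖ ≤ (p : ℝ) ^ (-(n : ℤ))}

lemma Bn_measurable (n : ℕ) : MeasurableSet (Bn p n) := by
  have : IsClosed (Bn p n) := isClosed_le (continuous_norm) continuous_const
  exact this.measurableSet

lemma measure_Bn (hμ : μ Set.univ = 1) (n : ℕ) :
    μ (Bn p n) = (p : ℝ≥0∞)⁻¹ ^ n := by
  classical
  have hp : (1 : ℕ) < p := (Fact.out : p.Prime).one_lt
  have hfib : ∀ a : ZMod (p ^ n), (PadicInt.toZModPow n) ⁻¹' {a}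
      = (((a.val : ℕ) : ℤ_[p]) +ᵥ Bn p n) := by
    intro a
    have : NeZero (p ^ n) := ⟨pow_ne_zero _ (by omega)⟩
    ext y
    simp only [Set.mem_preimage, Set.mem_singleton_iff, Set.mem_vadd_set_iff_neg_vadd_mem,
      vadd_eq_add, Bn, Set.mem_setOf_eq]
    rw [PadicInt.norm_le_pow_iff_mem_span_pow, ← PadicInt.ker_toZModPow, RingHom.mem_ker,
      map_add, map_neg, map_natCast, ZMod.natCast_val, ZMod.cast_id]
    rw [neg_add_eq_zero, eq_comm]
  have hdisj : Pairwise (Function.onFun Disjoint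
      fun a : ZMod (p ^ n) => (PadicInt.toZModPow n) ⁻¹' {a}) := by
    intro a b hab
    simp only [Function.onFun, Set.disjoint_left, Set.mem_preimage, Set.mem_singleton_iff]
    intro x ha hb; exact hab (ha.symm.trans hb)
  have hmeas : ∀ a : ZMod (p ^ n), MeasurableSet ((PadicInt.toZModPow n) ⁻¹' {a}) := by
    intro a; rw [hfib a]
    exact (Bn_measurable p n).const_vadd _
  have hcover : (⋃ a : ZMod (p ^ n), (PadicInt.toZModPow n) ⁻¹' {a}) = Set.univ := by
    ext y; simp
  have h2 : ∀ a : ZMod (p ^ n), μ ((PadicInt.toZModPow n) ⁻¹' {a}) = μ (Bn p n) := by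
    intro a; rw [hfib a]; exact measure_vadd _ _ _
  have key : (p : ℝ≥0∞) ^ n * μ (Bn p n) = 1 := by
    have h1 := measure_iUnion (μ := μ) hdisj hmeas
    rw [hcover, hμ] at h1
    rw [h1, tsum_fintype]
    simp only [h2, Finset.sum_const, Finset.card_univ, ZMod.card, nsmul_eq_mul]
    push_cast; ring
  have hpn : (p : ℝ≥0∞) ^ n ≠ 0 := by positivity
  have hpn' : (p : ℝ≥0∞) ^ n ≠ ⊤ := ENNReal.pow_ne_top (ENNReal.natCast_ne_top p)
  have : μ (Bn p n) = ((p : ℝ≥0∞) ^ n)⁻¹ * ((p : ℝ≥0∞) ^ n * μ (Bn p n)) := by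
    rw [← mul_assoc, ENNReal.inv_mul_cancel hpn hpn', one_mul]
  rw [this, key, mul_one, ← ENNReal.inv_pow]

lemma norm_on_shell {k : ℕ} {y : ℤ_[p]} (h1 : y ∈ Bn p k) (h2 : y ∉ Bn p (k+1)) :
    ‖y‖ = (p : ℝ) ^ (-(k : ℤ)) := by
  refine le_antisymm h1 (not_lt.mp fun hlt => h2 ?_)
  have := (PadicInt.norm_le_pow_iff_norm_lt_pow_add_one y (-(k:ℤ) - 1)).mpr
  simp only [Bn, Set.mem_setOf_eq]
  have h := this (by rwa [sub_add_cancel])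
  convert h using 2
  push_cast; ring

lemma Bn_anti {k : ℕ} : Bn p (k+1) ⊆ Bn p k := by
  have hp : (1:ℕ) < p := (Fact.out : p.Prime).one_lt
  intro y hy
  have h1 : (1:ℝ) ≤ (p:ℝ) := by exact_mod_cast hp.le
  calc ‖y‖ ≤ (p:ℝ) ^ (-((k:ℤ)+1)) := by push_cast at hy ⊢; exact hy
    _ ≤ (p:ℝ) ^ (-(k:ℤ)) := zpow_le_zpow_right₀ h1 (by omega)

lemma measure_Bn_ne_top (hμ : μ Set.univ = 1) (k : ℕ) : μ (Bn p k) ≠ ⊤ := by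
  rw [measure_Bn p μ hμ]
  exact ENNReal.pow_ne_top (ENNReal.inv_ne_top.mpr (Nat.cast_ne_zero.mpr (Fact.out : p.Prime).pos.ne'))

lemma measure_shell_real (hμ : μ Set.univ = 1) (k : ℕ) :
    (μ (Bn p k \ Bn p (k+1))).toReal = (p:ℝ)⁻¹ ^ k * (1 - (p:ℝ)⁻¹) := by
  have hp : (1:ℕ) < p := (Fact.out : p.Prime).one_lt
  rw [measure_diff (Bn_anti p) (Bn_measurable p (k+1)).nullMeasurableSet
    (measure_Bn_ne_top p μ hμ (k+1)), measure_Bn p μ hμ, measure_Bn p μ hμ]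
  have hle : ((p:ℝ≥0∞))⁻¹ ^ (k+1) ≤ ((p:ℝ≥0∞))⁻¹ ^ k := by
    rw [pow_succ]
    calc ((p:ℝ≥0∞))⁻¹ ^ k * (p:ℝ≥0∞)⁻¹ ≤ ((p:ℝ≥0∞))⁻¹ ^ k * 1 := by
          gcongr
          exact ENNReal.inv_le_one.mpr (by exact_mod_cast hp.le)
      _ = ((p:ℝ≥0∞))⁻¹ ^ k := mul_one _
  rw [ENNReal.toReal_sub_of_le hle
    (ENNReal.pow_ne_top (ENNReal.inv_ne_top.mpr (Nat.cast_ne_zero.mpr (Fact.out : p.Prime).pos.ne')))]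
  have hpR : (0:ℝ) < p := by positivity
  simp only [ENNReal.toReal_pow, ENNReal.toReal_inv, ENNReal.toReal_natCast]
  ring

lemma compl_Bn_eq (k : ℕ) :
    {y : ℤ_[p] | (p:ℝ) ^ (-(k:ℤ)) ≤ ‖y‖} = (Bn p (k+1))ᶜ := by
  ext y
  simp only [Set.mem_setOf_eq, Set.mem_compl_iff, Bn]
  rw [show ((-(↑(k+1)):ℤ)) = (-(k:ℤ)-1) by push_cast; ring,
    PadicInt.norm_le_pow_iff_norm_lt_pow_add_one, sub_add_cancel, not_lt]

lemma norm_inv_integrableOn (hμ : μ Set.univ = 1) (k : ℕ) :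
    IntegrableOn (fun y : ℤ_[p] => ‖y‖⁻¹) ((Bn p (k+1))ᶜ) μ := by
  have : IsFiniteMeasure μ := ⟨by rw [hμ]; exact ENNReal.one_lt_top⟩
  apply Measure.integrableOn_of_bounded (measure_ne_top μ _)
    ((continuous_norm.measurable.inv).aestronglyMeasurable)
  filter_upwards [ae_restrict_mem (Bn_measurable p (k+1)).compl] with y hy
  rw [← compl_Bn_eq] at hy
  have hp0 : (0:ℝ) < p := by exact_mod_cast (Fact.out : p.Prime).pos
  have h0 : (0:ℝ) < (p:ℝ) ^ (-(k:ℤ)) := by positivity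
  rw [Real.norm_eq_abs]
  show |‖y‖⁻¹| ≤ _
  rw [abs_of_nonneg (inv_nonneg.mpr (norm_nonneg y))]
  calc ‖y‖⁻¹ ≤ ((p:ℝ) ^ (-(k:ℤ)))⁻¹ := by
        exact inv_anti₀ h0 hy
    _ = (p:ℝ) ^ (k:ℤ) := by rw [← zpow_neg, neg_neg]

lemma shell_integral (hμ : μ Set.univ = 1) (k : ℕ) :
    ∫ y in Bn p k \ Bn p (k+1), ‖y‖⁻¹ ∂μ = 1 - (p:ℝ)⁻¹ := by
  have hp0 : (0:ℝ) < p := by exact_mod_cast (Fact.out : p.Prime).pos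
  have hmeas : MeasurableSet (Bn p k \ Bn p (k+1)) :=
    (Bn_measurable p k).diff (Bn_measurable p (k+1))
  rw [setIntegral_congr_fun hmeas (g := fun _ => ((p:ℝ) ^ (-(k:ℤ)))⁻¹)
    (fun y hy => by rw [norm_on_shell p hy.1 hy.2]),
    setIntegral_const, measureReal_def, measure_shell_real p μ hμ, smul_eq_mul]
  rw [zpow_neg, zpow_natCast, inv_inv]
  have : (p:ℝ) ^ k ≠ 0 := by positivity
  field_simp
  have e : (p:ℝ) ^ k * (p:ℝ)⁻¹ ^ k = 1 := by rw [← mul_pow, mul_inv_cancel₀ hp0.ne', one_pow]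
  linear_combination ((p:ℝ) - 1) * e

lemma Bn_zero : Bn p 0 = Set.univ := by
  ext y
  simpa [Bn] using PadicInt.norm_le_one y

lemma inner_integral (hμ : μ Set.univ = 1) (k : ℕ) :
    ∫ y in (Bn p (k+1))ᶜ, ‖y‖⁻¹ ∂μ = (k + 1) * (1 - (p:ℝ)⁻¹) := by
  induction k with
  | zero =>
    have : (Bn p 1)ᶜ = Bn p 0 \ Bn p 1 := by rw [Bn_zero]; ext y; simp
    rw [this, shell_integral p μ hμ 0]
    norm_num
  | succ k ih =>
    have hsplit : (Bn p (k+2))ᶜ = (Bn p (k+1))ᶜ ∪ (Bn p (k+1) \ Bn p (k+2)) := by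
      ext y
      simp only [Set.mem_compl_iff, Set.mem_union, Set.mem_diff]
      constructor
      · intro h
        by_cases h1 : y ∈ Bn p (k+1)
        · exact Or.inr ⟨h1, h⟩
        · exact Or.inl h1
      · rintro (h | ⟨_, h2⟩)
        · exact fun hc => h (Bn_anti p hc)
        · exact h2
    have hdisj : Disjoint ((Bn p (k+1))ᶜ) (Bn p (k+1) \ Bn p (k+2)) := by
      rw [Set.disjoint_left]
      intro y hy hy2
      exact hy hy2.1
    rw [hsplit, setIntegral_union hdisj
      ((Bn_measurable p (k+1)).diff (Bn_measurable p (k+2)))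
      (norm_inv_integrableOn p μ hμ k)
      (((norm_inv_integrableOn p μ hμ (k+1))).mono_set (by
        intro y hy
        simp only [Set.mem_compl_iff]
        exact fun hc => hy.2 hc)),
      ih, shell_integral p μ hμ (k+1)]
    push_cast
    ring

noncomputable def vnat (z : ℤ_[p]) : ℕ := z.valuation

lemma vnat_cast {z : ℤ_[p]} : ((vnat p z : ℤ)) = z.valuation :=
  rfl

lemma vnat_spec {z : ℤ_[p]} (hz : z ≠ 0) : ‖z‖ = (p:ℝ) ^ (-(vnat p z : ℤ)) := by
  rw [PadicInt.norm_eq_zpow_neg_valuation hz, vnat_cast]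

lemma mem_Bn_iff {z : ℤ_[p]} (hz : z ≠ 0) (n : ℕ) : z ∈ Bn p n ↔ n ≤ vnat p z := by
  rw [Bn, Set.mem_setOf_eq, PadicInt.norm_le_pow_iff_le_valuation z hz, vnat]

lemma measurable_vnat : Measurable (vnat p) := by
  have hT : ∀ n : ℕ, MeasurableSet {z : ℤ_[p] | n ≤ vnat p z} := by
    intro n
    rcases Nat.eq_zero_or_pos n with rfl | hn
    · have : {z : ℤ_[p] | 0 ≤ vnat p z} = Set.univ := by ext; simp
      rw [this]; exact MeasurableSet.univ
    · have : {z : ℤ_[p] | n ≤ vnat p z} = Bn p n \ {0} := by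
        ext z
        by_cases hz : z = 0
        · subst hz
          simp only [Set.mem_setOf_eq, Set.mem_diff, Set.mem_singleton_iff, vnat,
            PadicInt.valuation_zero, Int.toNat_zero, not_true, and_false, iff_false]
          omega
        · simp [Set.mem_diff, hz, mem_Bn_iff p hz n]
      rw [this]
      exact (Bn_measurable p n).diff (measurableSet_singleton 0)
  apply measurable_to_countable'
  intro n
  have : vnat p ⁻¹' {n} = {z : ℤ_[p] | n ≤ vnat p z} \ {z : ℤ_[p] | n + 1 ≤ vnat p z} := by
    ext z; simp [Set.mem_preimage]; omega
  rw [this]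
  exact (hT n).diff (hT (n+1))

lemma vnat_tsum {z : ℤ_[p]} (hz : z ≠ 0) :
    ((vnat p z : ℝ≥0∞)) = ∑' j : ℕ, (Bn p (j+1)).indicator (fun _ => (1:ℝ≥0∞)) z := by
  classical
  have hterm : ∀ j : ℕ, (Bn p (j+1)).indicator (fun _ => (1:ℝ≥0∞)) z
      = if j < vnat p z then 1 else 0 := by
    intro j
    rw [Set.indicator_apply]
    congr 1
    simp only [eq_iff_iff, mem_Bn_iff p hz]
    omega
  rw [tsum_congr hterm, tsum_eq_sum (s := Finset.range (vnat p z))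
    (fun j hj => by rw [Finset.mem_range] at hj; rw [if_neg (by omega)])]
  have h1 : ∀ j ∈ Finset.range (vnat p z), (if j < vnat p z then (1:ℝ≥0∞) else 0) = 1 :=
    fun j hj => if_pos (Finset.mem_range.mp hj)
  rw [Finset.sum_congr rfl h1, Finset.sum_const, Finset.card_range, nsmul_eq_mul, mul_one]

lemma measure_singleton_zero (hμ : μ Set.univ = 1) (c : ℤ_[p]) : μ {c} = 0 := by
  have hp : (1:ℕ) < p := (Fact.out : p.Prime).one_lt
  have hbound : ∀ n : ℕ, μ {c} ≤ (p:ℝ≥0∞)⁻¹ ^ n := by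
    intro n
    calc μ {c} ≤ μ (c +ᵥ Bn p n) := by
          apply measure_mono
          intro z hz
          rw [Set.mem_singleton_iff] at hz
          subst hz
          rw [Set.mem_vadd_set_iff_neg_vadd_mem]
          simp only [vadd_eq_add, neg_add_cancel, Bn, Set.mem_setOf_eq, norm_zero]
          positivity
      _ = μ (Bn p n) := measure_vadd _ _ _
      _ = (p:ℝ≥0∞)⁻¹ ^ n := measure_Bn p μ hμ n
  have hlt : ((p:ℝ≥0∞))⁻¹ < 1 := by
    rw [ENNReal.inv_lt_one]
    exact_mod_cast hp
  exact le_antisymm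
    (ge_of_tendsto' (ENNReal.tendsto_pow_atTop_nhds_zero_of_lt_one hlt) hbound) zero_le

lemma lintegral_vnat_comp (hμ : μ Set.univ = 1) (g : ℤ_[p] → ℤ_[p])
    (hnull : μ {x | g x = 0} = 0)
    (hg : ∀ n : ℕ, ∃ c : ℤ_[p], {x | g x ∈ Bn p n} = c +ᵥ Bn p n) :
    ∫⁻ x, (vnat p (g x) : ℝ≥0∞) ∂μ = (p:ℝ≥0∞)⁻¹ * (1 - (p:ℝ≥0∞)⁻¹)⁻¹ := by
  have hmeas : ∀ n : ℕ, MeasurableSet {x | g x ∈ Bn p n} := by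
    intro n; obtain ⟨c, hc⟩ := hg n; rw [hc]; exact (Bn_measurable p n).const_vadd c
  have hmu : ∀ n : ℕ, μ {x | g x ∈ Bn p n} = (p:ℝ≥0∞)⁻¹ ^ n := by
    intro n; obtain ⟨c, hc⟩ := hg n; rw [hc, measure_vadd, measure_Bn p μ hμ]
  have step1 : ∫⁻ x, (vnat p (g x) : ℝ≥0∞) ∂μ
      = ∫⁻ x, ∑' j : ℕ, ({x | g x ∈ Bn p (j+1)}).indicator (fun _ => (1:ℝ≥0∞)) x ∂μ := by
    apply lintegral_congr_ae
    have : ∀ᵐ x ∂μ, g x ≠ 0 := by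
      rw [ae_iff]; simpa using hnull
    filter_upwards [this] with x hx
    rw [vnat_tsum p hx]
    apply tsum_congr
    intro j
    classical
    rw [Set.indicator_apply, Set.indicator_apply]
    simp only [Set.mem_setOf_eq]
  rw [step1, lintegral_tsum (fun j =>
    ((measurable_const.indicator (hmeas (j+1))).aemeasurable))]
  have : ∀ j : ℕ, ∫⁻ x, ({x | g x ∈ Bn p (j+1)}).indicator (fun _ => (1:ℝ≥0∞)) x ∂μ
      = (p:ℝ≥0∞)⁻¹ ^ (j+1) := by
    intro j
    rw [lintegral_indicator (hmeas (j+1)), setLIntegral_one, hmu]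
  rw [tsum_congr this, ENNReal.tsum_geometric_add_one]

lemma Bn_neg_mem {n : ℕ} {z : ℤ_[p]} (h : z ∈ Bn p n) : -z ∈ Bn p n := by
  simpa [Bn] using h

lemma lint_vnat_one_sub (hμ : μ Set.univ = 1) :
    ∫⁻ x, (vnat p (1 - x) : ℝ≥0∞) ∂μ = (p:ℝ≥0∞)⁻¹ * (1 - (p:ℝ≥0∞)⁻¹)⁻¹ := by
  apply lintegral_vnat_comp p μ hμ
  · have : {x : ℤ_[p] | 1 - x = 0} = {1} := by
      ext x
      simp only [Set.mem_setOf_eq, Set.mem_singleton_iff]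
      constructor
      · intro h; linear_combination -h
      · intro h; rw [h]; ring
    rw [this]; exact measure_singleton_zero p μ hμ 1
  · intro n
    refine ⟨1, ?_⟩
    ext x
    rw [Set.mem_vadd_set_iff_neg_vadd_mem, Set.mem_setOf_eq]
    constructor
    · intro h
      have := Bn_neg_mem p h
      rw [neg_sub] at this
      rw [vadd_eq_add]
      convert this using 1
      ring
    · intro h
      rw [vadd_eq_add] at h
      have := Bn_neg_mem p h
      convert this using 1
      ring

lemma lint_vnat_one_add (hμ : μ Set.univ = 1) :
    ∫⁻ x, (vnat p (1 + x) : ℝ≥0∞) ∂μ = (p:ℝ≥0∞)⁻¹ * (1 - (p:ℝ≥0∞)⁻¹)⁻¹ := by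
  apply lintegral_vnat_comp p μ hμ
  · have : {x : ℤ_[p] | 1 + x = 0} = {-1} := by
      ext x
      simp only [Set.mem_setOf_eq, Set.mem_singleton_iff]
      constructor
      · intro h; linear_combination h
      · intro h; rw [h]; ring
    rw [this]; exact measure_singleton_zero p μ hμ (-1)
  · intro n
    refine ⟨-1, ?_⟩
    ext x
    rw [Set.mem_vadd_set_iff_neg_vadd_mem, Set.mem_setOf_eq, neg_neg, vadd_eq_add]

lemma vnat_mul {a b : ℤ_[p]} (ha : a ≠ 0) (hb : b ≠ 0) :
    vnat p (a * b) = vnat p a + vnat p b := by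
  have hcast : ((a * b : ℤ_[p]) : ℚ_[p]) = (a : ℚ_[p]) * (b : ℚ_[p]) := by push_cast; ring
  have ha' : (a : ℚ_[p]) ≠ 0 := fun hc => ha (Subtype.coe_injective (by simpa using hc))
  have hb' : (b : ℚ_[p]) ≠ 0 := fun hc => hb (Subtype.coe_injective (by simpa using hc))
  exact PadicInt.valuation_mul ha hb

theorem stmt_5' (hodd : p ≠ 2) (hμ : μ Set.univ = 1) :
    ∫ x : ℤ_[p], (∫ y in {y : ℤ_[p] | ‖1 - x ^ 2‖ ≤ ‖y‖}, ‖y‖⁻¹ ∂μ) ∂μ =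
      1 + (p : ℝ)⁻¹ := by
  have hp : (1:ℕ) < p := (Fact.out : p.Prime).one_lt
  have hp0R : (0:ℝ) < p := by exact_mod_cast (Fact.out : p.Prime).pos
  have hNnull : μ {(1:ℤ_[p]), -1} = 0 := by
    rw [Set.insert_eq]
    exact measure_union_null (measure_singleton_zero p μ hμ 1) (measure_singleton_zero p μ hμ (-1))
  have hae : ∀ᵐ x ∂μ, x ∉ ({1, -1} : Set ℤ_[p]) := by
    rw [ae_iff]
    simp only [not_not, Set.setOf_mem_eq]
    exact hNnull
  set G : ℤ_[p] → ℝ :=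
    fun x => (((vnat p (1-x) + vnat p (1+x) : ℕ) : ℝ) + 1) * (1 - (p:ℝ)⁻¹) with hG
  have hFG : (fun x => ∫ y in {y : ℤ_[p] | ‖1 - x^2‖ ≤ ‖y‖}, ‖y‖⁻¹ ∂μ) =ᵐ[μ] G := by
    filter_upwards [hae] with x hx
    simp only [Set.mem_insert_iff, Set.mem_singleton_iff, not_or] at hx
    obtain ⟨hx1, hx2⟩ := hx
    have h1 : (1:ℤ_[p]) - x ≠ 0 := fun hc => hx1 (by linear_combination -hc)
    have h2 : (1:ℤ_[p]) + x ≠ 0 := fun hc => hx2 (by linear_combination hc)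
    have hfact : (1:ℤ_[p]) - x^2 = (1-x)*(1+x) := by ring
    have h12 : (1:ℤ_[p]) - x^2 ≠ 0 := by rw [hfact]; exact mul_ne_zero h1 h2
    have hset : {y : ℤ_[p] | ‖1 - x^2‖ ≤ ‖y‖} = (Bn p (vnat p (1 - x^2) + 1))ᶜ := by
      rw [← compl_Bn_eq]
      ext y
      rw [Set.mem_setOf_eq, Set.mem_setOf_eq, vnat_spec p h12]
    rw [hset, inner_integral p μ hμ]
    have hval : vnat p (1 - x^2) = vnat p (1-x) + vnat p (1+x) := by
      rw [hfact, vnat_mul p h1 h2]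
    rw [hval]
  rw [integral_congr_ae hFG]
  have hpinvle : (p:ℝ)⁻¹ ≤ 1 := by
    rw [inv_le_one_iff₀]; right; exact_mod_cast hp.le
  have hGnn : 0 ≤ᵐ[μ] G := Filter.Eventually.of_forall (fun x => by
    apply mul_nonneg
    · positivity
    · rw [sub_nonneg]; exact hpinvle)
  have hGmeas : AEStronglyMeasurable G μ := by
    apply Measurable.aestronglyMeasurable
    apply Measurable.mul ?_ measurable_const
    apply Measurable.add ?_ measurable_const
    exact measurable_from_nat.comp
      (((measurable_vnat p).comp ((continuous_const.sub continuous_id).measurable)).add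
        ((measurable_vnat p).comp ((continuous_const.add continuous_id).measurable)))
  rw [integral_eq_lintegral_of_nonneg_ae hGnn hGmeas]
  set a : ℝ≥0∞ := (p:ℝ≥0∞)⁻¹ with ha
  have halt : a < 1 := by
    rw [ha, ENNReal.inv_lt_one]; exact_mod_cast hp
  have h1a0 : (1:ℝ≥0∞) - a ≠ 0 := by
    intro h; exact absurd (tsub_eq_zero_iff_le.mp h) (not_le.mpr halt)
  have h1atop : (1:ℝ≥0∞) - a ≠ ⊤ := ne_top_of_le_ne_top ENNReal.one_ne_top tsub_le_self
  have hGof : ∀ x, ENNReal.ofReal (G x)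
      = ((vnat p (1-x) : ℝ≥0∞) + (vnat p (1+x) : ℝ≥0∞) + 1) * (1 - a) := by
    intro x
    rw [hG]
    rw [ENNReal.ofReal_mul (by positivity)]
    congr 1
    · rw [show (((vnat p (1-x) + vnat p (1+x) : ℕ) : ℝ) + 1)
          = (((vnat p (1-x) + vnat p (1+x) + 1 : ℕ) : ℝ)) by push_cast; ring,
        ENNReal.ofReal_natCast]
      push_cast
      ring
    · rw [ENNReal.ofReal_sub _ (by positivity), ENNReal.ofReal_one,
        ENNReal.ofReal_inv_of_pos hp0R, ENNReal.ofReal_natCast]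
  rw [lintegral_congr hGof]
  have hm1 : Measurable (fun x : ℤ_[p] => (vnat p (1-x) : ℝ≥0∞)) :=
    measurable_from_nat.comp
      ((measurable_vnat p).comp ((continuous_const.sub continuous_id).measurable))
  have hm2 : Measurable (fun x : ℤ_[p] => (vnat p (1+x) : ℝ≥0∞)) :=
    measurable_from_nat.comp
      ((measurable_vnat p).comp ((continuous_const.add continuous_id).measurable))
  rw [lintegral_mul_const _
      (f := fun x : ℤ_[p] => (vnat p (1-x) : ℝ≥0∞) + (vnat p (1+x) : ℝ≥0∞) + 1)
      ((hm1.add hm2).add measurable_const),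
    lintegral_add_right _ measurable_const, lintegral_add_left hm1,
    lintegral_const, hμ, mul_one, lint_vnat_one_sub p μ hμ, lint_vnat_one_add p μ hμ, ← ha]
  have hcancel : a * (1 - a)⁻¹ * (1 - a) = a := by
    rw [mul_assoc, ENNReal.inv_mul_cancel h1a0 h1atop, mul_one]
  have : (a * (1 - a)⁻¹ + a * (1 - a)⁻¹ + 1) * (1 - a) = 1 + a := by
    rw [add_mul, add_mul, hcancel, one_mul, add_assoc, add_comm a (1-a),
      tsub_add_cancel_of_le halt.le]
    rw [add_comm]
  have hane : a ≠ ⊤ := by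
    rw [ha]
    exact ENNReal.inv_ne_top.mpr (Nat.cast_ne_zero.mpr (by omega))
  rw [this, ENNReal.toReal_add ENNReal.one_ne_top hane, ENNReal.toReal_one]
  congr 1
  rw [ha, ENNReal.toReal_inv, ENNReal.toReal_natCast]

end Aux


/-- For an odd prime `p` and a Haar probability measure `μ` on `ℤ_p`,
`∫_{x ∈ ℤ_p} ( ∫_{{y ∈ ℤ_p : |1 − x²| ≤ |y|}} |y|⁻¹ dμ(y) ) dμ(x) = 1 + p⁻¹`. -/
theorem stmt_5 (p : ℕ) [Fact p.Prime] (hodd : p ≠ 2)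
    [MeasurableSpace ℤ_[p]] [BorelSpace ℤ_[p]]
    (μ : Measure ℤ_[p]) [μ.IsAddHaarMeasure] (hμ : μ Set.univ = 1) :
    ∫ x : ℤ_[p], (∫ y in {y : ℤ_[p] | ‖1 - x ^ 2‖ ≤ ‖y‖}, ‖y‖⁻¹ ∂μ) ∂μ =
      1 + (p : ℝ)⁻¹ := stmt_5' p μ hodd hμ
end

section
/- Let p be a prime. The Fourier transform on Q_p (with respect to the standard additive character and the Haar measure giving Z_p volume 1) of the function x ↦ val_p(x)·1_{Z_p}(x) is the function ξ ↦ (1 − p^{−1})^{−1} · min{ p^{−1}, |ξ|_p^{−1} }. -/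
section aux
open MeasureTheory Classical ENNReal NNReal

variable {p : ℕ} [Fact p.Prime]

-- character values have norm 1
lemma psi_pow (ψ : ℚ_[p] → ℂ) (hψadd : ∀ x y : ℚ_[p], ψ (x + y) = ψ x * ψ y)
    (hψtriv : ∀ x : ℚ_[p], ‖x‖ ≤ 1 → ψ x = 1) (x : ℚ_[p]) :
    ∀ n : ℕ, ψ ((n : ℚ_[p]) * x) = ψ x ^ n := by
  intro n
  induction n with
  | zero => simpa using hψtriv 0 (by simp)
  | succ n ih =>
    push_cast
    rw [add_mul, one_mul, hψadd, ih, pow_succ]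

lemma psi_norm_one (ψ : ℚ_[p] → ℂ) (hψadd : ∀ x y : ℚ_[p], ψ (x + y) = ψ x * ψ y)
    (hψtriv : ∀ x : ℚ_[p], ‖x‖ ≤ 1 → ψ x = 1) (x : ℚ_[p]) : ‖ψ x‖ = 1 := by
  obtain ⟨k, hk⟩ := pow_unbounded_of_one_lt ‖x‖ (by exact_mod_cast (Fact.out : p.Prime).one_lt : (1:ℝ) < p)
  have h1 : ψ (((p ^ k : ℕ) : ℚ_[p]) * x) = 1 := by
    apply hψtriv
    have hnx : ‖((p ^ k : ℕ) : ℚ_[p]) * x‖ = ((p:ℝ) ^ k)⁻¹ * ‖x‖ := by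
      rw [norm_mul]
      congr 1
      push_cast
      rw [norm_pow, Padic.norm_p]
      simp
    have hp1 : (1:ℝ) < p := by exact_mod_cast (Fact.out : p.Prime).one_lt
    rw [hnx, inv_mul_le_iff₀ (pow_pos (by linarith) k), mul_one]
    exact hk.le
  rw [psi_pow ψ hψadd hψtriv x (p ^ k)] at h1
  have h2 : ‖ψ x‖ ^ (p ^ k) = 1 := by
    rw [← norm_pow, h1, norm_one]
  have hne : p ^ k ≠ 0 := pow_ne_zero k (Fact.out : p.Prime).ne_zero
  rcases lt_trichotomy ‖ψ x‖ 1 with h | h | h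
  · exact absurd h2 (by simpa using (pow_lt_one₀ (norm_nonneg _) h hne).ne)
  · exact h
  · exact absurd h2 (by simpa using (one_lt_pow₀ h hne).ne')

lemma ball_meas [MeasurableSpace ℚ_[p]] [BorelSpace ℚ_[p]]
    (μ : Measure ℚ_[p]) [μ.IsAddHaarMeasure]
    (hμ : μ {x : ℚ_[p] | ‖x‖ ≤ 1} = 1) (n : ℕ) :
    μ {x : ℚ_[p] | ‖x‖ ≤ (p:ℝ) ^ (-(n:ℤ))} = ((p : ℝ≥0∞) ^ n)⁻¹ := by
  set B : Set ℚ_[p] := {x : ℚ_[p] | ‖x‖ ≤ (p:ℝ) ^ (-(n:ℤ))} with hB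
  have hBm : MeasurableSet B := by
    have : B = Metric.closedBall 0 ((p:ℝ) ^ (-(n:ℤ))) := by
      ext x; simp [hB, Metric.mem_closedBall, dist_eq_norm]
    rw [this]; exact measurableSet_closedBall
  -- the unit ball is the disjoint union of p^n translates of B
  have key : {x : ℚ_[p] | ‖x‖ ≤ 1} = ⋃ c ∈ Finset.range (p ^ n), (fun y => -((c:ℚ_[p])) + y) ⁻¹' B := by
    ext x
    simp only [Set.mem_setOf_eq, Set.mem_iUnion, Set.mem_preimage, Finset.mem_range, hB]
    constructor
    · intro hx
      set z : ℤ_[p] := ⟨x, hx⟩ with hz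
      refine ⟨z.appr n, z.appr_lt n, ?_⟩
      have h1 : ‖z - (z.appr n : ℤ_[p])‖ ≤ (p:ℝ) ^ (-(n:ℤ)) :=
        ((z - (z.appr n : ℤ_[p])).norm_le_pow_iff_mem_span_pow n).mpr (z.appr_spec n)
      have h2 : ((z - (z.appr n : ℤ_[p]) : ℤ_[p]) : ℚ_[p]) = -((z.appr n : ℚ_[p])) + x := by
        rw [PadicInt.coe_sub, PadicInt.coe_natCast]; exact sub_eq_neg_add _ _
      simpa [Set.mem_setOf_eq, ← h2, PadicInt.norm_def] using h1
    · rintro ⟨c, hc, hcy⟩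
      have h1 : ‖(c : ℚ_[p])‖ ≤ 1 := by
        have := Padic.norm_int_le_one (p := p) (c : ℤ); exact_mod_cast this
      have h2 : (p:ℝ) ^ (-(n:ℤ)) ≤ 1 := by
        apply zpow_le_one_of_nonpos₀
        · exact_mod_cast (Fact.out : p.Prime).one_lt.le
        · simp
      calc ‖x‖ = ‖(c:ℚ_[p]) + (-(c:ℚ_[p]) + x)‖ := by ring_nf
        _ ≤ max ‖(c:ℚ_[p])‖ ‖-(c:ℚ_[p]) + x‖ := Padic.nonarchimedean _ _
        _ ≤ 1 := max_le h1 (le_trans hcy h2)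
  have hdisj : (Finset.range (p ^ n) : Set ℕ).Pairwise
      (Function.onFun Disjoint (fun c => (fun y => -((c:ℚ_[p])) + y) ⁻¹' B)) := by
    intro c hc c' hc' hne
    simp only [Finset.coe_range, Set.mem_Iio] at hc hc'
    rw [Function.onFun, Set.disjoint_left]
    intro x hx hx'
    simp only [Set.mem_preimage, hB, Set.mem_setOf_eq] at hx hx'
    apply hne
    have hdiff : ‖((c:ℚ_[p]) - c')‖ ≤ (p:ℝ) ^ (-(n:ℤ)) := by
      have : (c:ℚ_[p]) - c' = (-((c':ℚ_[p])) + x) - (-((c:ℚ_[p])) + x) := by ring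
      rw [this]
      calc ‖(-((c':ℚ_[p])) + x) - (-((c:ℚ_[p])) + x)‖
          = ‖(-((c':ℚ_[p])) + x) + -(-((c:ℚ_[p])) + x)‖ := by rw [sub_eq_add_neg]
        _ ≤ max ‖-((c':ℚ_[p])) + x‖ ‖-(-((c:ℚ_[p])) + x)‖ := Padic.nonarchimedean _ _
        _ = max ‖-((c':ℚ_[p])) + x‖ ‖-((c:ℚ_[p])) + x‖ := by rw [norm_neg]
        _ ≤ (p:ℝ) ^ (-(n:ℤ)) := max_le hx' hx
    have hdvd : ((p:ℤ) ^ n) ∣ ((c:ℤ) - c') := by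
      rw [← Padic.norm_int_le_pow_iff_dvd]
      exact_mod_cast hdiff
    have h0 : ((c:ℤ) - c') = 0 := by
      apply Int.eq_zero_of_abs_lt_dvd hdvd
      have hcn : (c:ℤ) < (p:ℤ) ^ n := by exact_mod_cast hc
      have hcn' : (c':ℤ) < (p:ℤ) ^ n := by exact_mod_cast hc'
      rw [abs_lt]; omega
    omega
  have hsum : μ {x : ℚ_[p] | ‖x‖ ≤ 1}
      = ∑ c ∈ Finset.range (p ^ n), μ ((fun y => -((c:ℚ_[p])) + y) ⁻¹' B) := by
    rw [key]
    exact measure_biUnion_finset hdisj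
      (fun c _ => hBm.preimage (measurable_const_add _))
  have htrans : ∀ c : ℕ, μ ((fun y => -((c:ℚ_[p])) + y) ⁻¹' B) = μ B := fun c =>
    measure_preimage_add μ _ B
  simp only [htrans, Finset.sum_const, Finset.card_range, nsmul_eq_mul, hμ] at hsum
  have hpn : ((p ^ n : ℕ) : ℝ≥0∞) ≠ 0 := by
    exact_mod_cast pow_ne_zero n (Nat.cast_ne_zero.mpr (Fact.out : p.Prime).ne_zero)
  have hpn' : ((p ^ n : ℕ) : ℝ≥0∞) ≠ ⊤ := ENNReal.natCast_ne_top _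
  have hcan : ((p ^ n : ℕ) : ℝ≥0∞)⁻¹ * (((p ^ n : ℕ) : ℝ≥0∞) * μ B) = μ B := by
    rw [← mul_assoc, ENNReal.inv_mul_cancel hpn hpn', one_mul]
  have : μ B = ((p ^ n : ℕ) : ℝ≥0∞)⁻¹ := by
    rw [← hcan, ← hsum, mul_one]
  rw [this]; push_cast; ring

lemma ball_closed (n : ℤ) :
    {x : ℚ_[p] | ‖x‖ ≤ (p:ℝ) ^ n} = Metric.closedBall 0 ((p:ℝ) ^ n) := by
  ext x; simp [Metric.mem_closedBall, dist_eq_norm]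

lemma ball_int_integrable [MeasurableSpace ℚ_[p]] [BorelSpace ℚ_[p]]
    (μ : Measure ℚ_[p]) [μ.IsAddHaarMeasure]
    (ψ : ℚ_[p] → ℂ) (hψcont : Continuous ψ) (ξ : ℚ_[p]) (n : ℤ) :
    Integrable (Set.indicator {x : ℚ_[p] | ‖x‖ ≤ (p:ℝ) ^ n} (fun x => ψ (ξ * x))) μ := by
  rw [ball_closed, integrable_indicator_iff measurableSet_closedBall]
  exact ((hψcont.comp (continuous_const.mul continuous_id)).continuousOn).integrableOn_compact
    (isCompact_closedBall _ _)

lemma ball_int [MeasurableSpace ℚ_[p]] [BorelSpace ℚ_[p]]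
    (μ : Measure ℚ_[p]) [μ.IsAddHaarMeasure]
    (hμ : μ {x : ℚ_[p] | ‖x‖ ≤ 1} = 1)
    (ψ : ℚ_[p] → ℂ) (hψcont : Continuous ψ)
    (hψadd : ∀ x y : ℚ_[p], ψ (x + y) = ψ x * ψ y)
    (hψtriv : ∀ x : ℚ_[p], ‖x‖ ≤ 1 → ψ x = 1)
    (hψnontriv : ∃ x : ℚ_[p], ‖x‖ ≤ p ∧ ψ x ≠ 1)
    (ξ : ℚ_[p]) (hξ : ξ ≠ 0) (n : ℕ) :
    ∫ x, Set.indicator {x : ℚ_[p] | ‖x‖ ≤ (p:ℝ) ^ (-(n:ℤ))} (fun x => ψ (ξ * x)) x ∂μ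
      = if ‖ξ‖ ≤ (p:ℝ) ^ (n:ℤ) then (((p:ℝ) ^ (-(n:ℤ)) : ℝ) : ℂ) else 0 := by
  have hp1 : (1:ℝ) < p := by exact_mod_cast (Fact.out : p.Prime).one_lt
  set B : Set ℚ_[p] := {x : ℚ_[p] | ‖x‖ ≤ (p:ℝ) ^ (-(n:ℤ))} with hBdef
  have hBm : MeasurableSet B := by
    rw [hBdef, ball_closed]; exact measurableSet_closedBall
  split_ifs with hcond
  · -- ψ(ξx) = 1 on B
    rw [integral_indicator hBm]
    have : ∀ x ∈ B, ψ (ξ * x) = 1 := by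
      intro x hx
      apply hψtriv
      rw [norm_mul]
      calc ‖ξ‖ * ‖x‖ ≤ (p:ℝ) ^ (n:ℤ) * (p:ℝ) ^ (-(n:ℤ)) := by
            apply mul_le_mul hcond hx (norm_nonneg x) (by positivity)
        _ = 1 := by rw [← zpow_add₀ (by linarith : (p:ℝ) ≠ 0)]; simp
    rw [setIntegral_congr_fun hBm this, setIntegral_const]
    rw [hBdef, measureReal_def, ball_meas μ hμ n]
    have h3 : ((p:ℝ≥0∞) ^ n)⁻¹.toReal = (p:ℝ) ^ (-(n:ℤ)) := by
      rw [ENNReal.toReal_inv, ENNReal.toReal_pow, ENNReal.toReal_natCast]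
      rw [zpow_neg, zpow_natCast]
    rw [h3, Complex.real_smul, mul_one]
  · -- nontrivial character on the ball: integral vanishes
    push_neg at hcond
    obtain ⟨z, hz, hzne⟩ := hψnontriv
    set y : ℚ_[p] := z / ξ with hy
    have hyB : ∀ x : ℚ_[p], x + y ∈ B ↔ x ∈ B := by
      have hyn : ‖y‖ ≤ (p:ℝ) ^ (-(n:ℤ)) := by
        rw [hy, norm_div]
        rw [div_le_iff₀ (norm_pos_iff.mpr hξ)]
        calc ‖z‖ ≤ (p:ℝ) := hz
          _ ≤ (p:ℝ) ^ (-(n:ℤ)) * (p:ℝ) ^ ((n:ℤ)+1) := by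
              rw [← zpow_add₀ (by linarith : (p:ℝ) ≠ 0)]; simp
          _ ≤ (p:ℝ) ^ (-(n:ℤ)) * ‖ξ‖ := by
              apply mul_le_mul_of_nonneg_left _ (by positivity)
              have := Padic.norm_le_pow_iff_norm_lt_pow_add_one ξ (n+1)
              by_contra hlt
              push_neg at hlt
              have : ‖ξ‖ ≤ (p:ℝ) ^ (n:ℤ) := by
                have h2 := (Padic.norm_lt_pow_iff_norm_le_pow_sub_one ξ ((n:ℤ)+1)).mp ?_
                · simpa using h2
                · exact_mod_cast hlt
              linarith
      intro x
      constructor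
      · intro hx
        have : x = (x + y) + (-y) := by ring
        rw [hBdef, Set.mem_setOf_eq, this]
        calc ‖(x + y) + (-y)‖ ≤ max ‖x + y‖ ‖-y‖ := Padic.nonarchimedean _ _
          _ ≤ (p:ℝ) ^ (-(n:ℤ)) := max_le hx (by rwa [norm_neg])
      · intro hx
        rw [hBdef, Set.mem_setOf_eq]
        calc ‖x + y‖ ≤ max ‖x‖ ‖y‖ := Padic.nonarchimedean _ _
          _ ≤ (p:ℝ) ^ (-(n:ℤ)) := max_le hx hyn
    have hψy : ψ (ξ * y) = ψ z := by rw [hy, mul_div_cancel₀ _ hξ]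
    set I := ∫ x, Set.indicator B (fun x => ψ (ξ * x)) x ∂μ with hI
    have hshift : I = ψ z * I := by
      conv_lhs => rw [hI, ← integral_add_right_eq_self (μ := μ)
        (fun x => Set.indicator B (fun x => ψ (ξ * x)) x) y]
      rw [← integral_const_mul]
      congr 1
      ext x
      by_cases hx : x ∈ B
      · rw [Set.indicator_of_mem ((hyB x).mpr hx), Set.indicator_of_mem hx]
        rw [mul_add, hψadd, mul_comm (ψ (ξ*x)), hψy]
      · rw [Set.indicator_of_notMem (fun h => hx ((hyB x).mp h)),
          Set.indicator_of_notMem hx, mul_zero]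
    have : (ψ z - 1) * I = 0 := by rw [sub_mul, one_mul, ← hshift, sub_self]
    rcases mul_eq_zero.mp this with h | h
    · exact absurd (sub_eq_zero.mp h) hzne
    · exact h

lemma tsum_pointwise (ψ : ℚ_[p] → ℂ)
    (hψtriv : ∀ x : ℚ_[p], ‖x‖ ≤ 1 → ψ x = 1)
    (ξ x : ℚ_[p]) :
    ∑' n : ℕ, Set.indicator {y : ℚ_[p] | ‖y‖ ≤ (p:ℝ) ^ (-((n+1:ℕ):ℤ))} (fun y => ψ (ξ * y)) x
      = (if ‖x‖ ≤ 1 ∧ x ≠ 0 then (x.valuation : ℂ) else 0) * ψ (ξ * x) := by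
  have hp1 : (1:ℝ) < p := by exact_mod_cast (Fact.out : p.Prime).one_lt
  by_cases hx1 : ‖x‖ ≤ 1
  · by_cases hx0 : x = 0
    · subst hx0
      have hmem : ∀ n : ℕ, (0:ℚ_[p]) ∈ {y : ℚ_[p] | ‖y‖ ≤ (p:ℝ) ^ (-((n+1:ℕ):ℤ))} := by
        intro n; simp only [Set.mem_setOf_eq, norm_zero]; positivity
      have hterm : ∀ n : ℕ,
          Set.indicator {y : ℚ_[p] | ‖y‖ ≤ (p:ℝ) ^ (-((n+1:ℕ):ℤ))} (fun y => ψ (ξ * y)) 0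
            = 1 := by
        intro n
        rw [Set.indicator_of_mem (hmem n), mul_zero]
        exact hψtriv 0 (by simp)
      rw [tsum_congr hterm]
      have hns : ¬ Summable (fun _ : ℕ => (1:ℂ)) := by
        intro h
        have h1 := h.tendsto_atTop_zero
        have h2 : Filter.Tendsto (fun _ : ℕ => (1:ℂ)) Filter.atTop (nhds 1) :=
          tendsto_const_nhds
        exact one_ne_zero (tendsto_nhds_unique h2 h1)
      rw [tsum_eq_zero_of_not_summable hns]
      simp
    · -- 0 < ‖x‖ ≤ 1
      have hk0 : 0 ≤ x.valuation := (Padic.norm_le_one_iff_val_nonneg x).mp hx1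
      have hnorm : ‖x‖ = (p:ℝ) ^ (-x.valuation) := Padic.norm_eq_zpow_neg_valuation hx0
      have hterm : ∀ n : ℕ,
          Set.indicator {y : ℚ_[p] | ‖y‖ ≤ (p:ℝ) ^ (-((n+1:ℕ):ℤ))} (fun y => ψ (ξ * y)) x
            = if n < x.valuation.toNat then ψ (ξ * x) else 0 := by
        intro n
        have hmem : x ∈ {y : ℚ_[p] | ‖y‖ ≤ (p:ℝ) ^ (-((n+1:ℕ):ℤ))}
            ↔ n < x.valuation.toNat := by
          simp only [Set.mem_setOf_eq, hnorm]
          rw [zpow_le_zpow_iff_right₀ hp1]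
          omega
        by_cases h : n < x.valuation.toNat
        · rw [if_pos h, Set.indicator_of_mem (hmem.mpr h)]
        · rw [if_neg h, Set.indicator_of_notMem (fun hm => h (hmem.mp hm))]
      rw [tsum_congr hterm, tsum_eq_sum (s := Finset.range x.valuation.toNat)
        (by intro n hn; rw [Finset.mem_range] at hn; exact if_neg hn)]
      rw [Finset.sum_ite_of_true (by intro n hn; exact Finset.mem_range.mp hn)]
      rw [Finset.sum_const, Finset.card_range, if_pos ⟨hx1, hx0⟩, nsmul_eq_mul]
      congr 1
      exact_mod_cast congrArg (Int.cast : ℤ → ℂ) (Int.toNat_of_nonneg hk0)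
  · have hterm : ∀ n : ℕ,
        Set.indicator {y : ℚ_[p] | ‖y‖ ≤ (p:ℝ) ^ (-((n+1:ℕ):ℤ))} (fun y => ψ (ξ * y)) x
          = 0 := by
      intro n
      apply Set.indicator_of_notMem
      simp only [Set.mem_setOf_eq, not_le]
      calc (p:ℝ) ^ (-((n+1:ℕ):ℤ)) ≤ 1 := by
            apply zpow_le_one_of_nonpos₀ (by linarith)
            omega
        _ < ‖x‖ := lt_of_not_ge hx1
    rw [tsum_congr hterm, tsum_zero, if_neg (fun h => hx1 h.1), zero_mul]

end aux

open MeasureTheory Classical in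

/-- For a prime `p`, the Fourier transform on `ℚ_p` (with respect to a standard
additive character `ψ` trivial exactly on `ℤ_p` and the Haar measure giving
`ℤ_p` volume `1`) of `x ↦ val_p(x)·1_{ℤ_p}(x)` is
`ξ ↦ (1 − p⁻¹)⁻¹ · min (p⁻¹) (|ξ|⁻¹)` (for `ξ ≠ 0`). -/
theorem stmt_6 (p : ℕ) [Fact p.Prime]
    [MeasurableSpace ℚ_[p]] [BorelSpace ℚ_[p]]
    (μ : Measure ℚ_[p]) [μ.IsAddHaarMeasure]
    (hμ : μ {x : ℚ_[p] | ‖x‖ ≤ 1} = 1)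
    (ψ : ℚ_[p] → ℂ) (hψcont : Continuous ψ)
    (hψadd : ∀ x y : ℚ_[p], ψ (x + y) = ψ x * ψ y)
    (hψtriv : ∀ x : ℚ_[p], ‖x‖ ≤ 1 → ψ x = 1)
    (hψnontriv : ∃ x : ℚ_[p], ‖x‖ ≤ p ∧ ψ x ≠ 1) :
    ∀ ξ : ℚ_[p], ξ ≠ 0 →
      ∫ x : ℚ_[p],
          (if ‖x‖ ≤ 1 ∧ x ≠ 0 then (x.valuation : ℂ) else 0) * ψ (ξ * x) ∂μ =
        (((1 - (p : ℝ)⁻¹)⁻¹ * min (p : ℝ)⁻¹ ‖ξ‖⁻¹ : ℝ) : ℂ) := by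
  intro ξ hξ
  have hp1 : (1:ℝ) < p := by exact_mod_cast (Fact.out : p.Prime).one_lt
  have hp0 : (p:ℝ) ≠ 0 := by linarith
  set g : ℕ → ℚ_[p] → ℂ :=
    fun n => Set.indicator {y : ℚ_[p] | ‖y‖ ≤ (p:ℝ) ^ (-((n+1:ℕ):ℤ))} (fun y => ψ (ξ * y))
    with hg
  have hBm : ∀ n : ℕ, MeasurableSet {y : ℚ_[p] | ‖y‖ ≤ (p:ℝ) ^ (-((n+1:ℕ):ℤ))} := fun n => by
    rw [ball_closed]; exact measurableSet_closedBall
  have hint : ∀ n, Integrable (g n) μ := fun n => ball_int_integrable μ ψ hψcont ξ _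
  have hmeas : ∀ n, AEStronglyMeasurable (g n) μ := fun n => (hint n).1
  have hlin : ∑' n : ℕ, ∫⁻ a, ‖g n a‖₊ ∂μ ≠ ⊤ := by
    have hcalc : ∀ n : ℕ, ∫⁻ a, ‖g n a‖₊ ∂μ = ((p:ENNReal)⁻¹) ^ (n+1) := by
      intro n
      have heq : ∀ a, (‖g n a‖₊ : ENNReal)
          = Set.indicator {y : ℚ_[p] | ‖y‖ ≤ (p:ℝ) ^ (-((n+1:ℕ):ℤ))} (fun _ => (1:ENNReal)) a := by
        intro a
        by_cases ha : a ∈ {y : ℚ_[p] | ‖y‖ ≤ (p:ℝ) ^ (-((n+1:ℕ):ℤ))}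
        · rw [hg]
          simp only [Set.indicator_of_mem ha]
          rw [show (1:ENNReal) = ((1:NNReal):ENNReal) by norm_num, ENNReal.coe_inj]
          ext
          simp [coe_nnnorm, psi_norm_one ψ hψadd hψtriv (ξ * a)]
        · rw [hg]
          simp only [Set.indicator_of_notMem ha]
          simp
      rw [lintegral_congr heq, lintegral_indicator_const (hBm n), one_mul,
        ball_meas μ hμ (n+1)]
      rw [ENNReal.inv_pow]
    rw [tsum_congr hcalc]
    have hle : ∀ n : ℕ, ((p:ENNReal)⁻¹) ^ (n+1) ≤ ((p:ENNReal)⁻¹) ^ n := fun n =>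
      pow_le_pow_right_of_le_one'
        (ENNReal.inv_le_one.mpr (by exact_mod_cast (Fact.out : p.Prime).one_lt.le)) (by omega)
    apply ne_top_of_le_ne_top _ (ENNReal.tsum_le_tsum hle)
    rw [ENNReal.tsum_geometric]
    apply ENNReal.inv_ne_top.mpr
    rw [ne_eq, tsub_eq_zero_iff_le, not_le]
    apply ENNReal.inv_lt_one.mpr
    exact_mod_cast (Fact.out : p.Prime).one_lt
  have key := integral_tsum hmeas hlin
  have hfun : (fun x : ℚ_[p] =>
      (if ‖x‖ ≤ 1 ∧ x ≠ 0 then (x.valuation : ℂ) else 0) * ψ (ξ * x))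
      = fun x => ∑' n : ℕ, g n x := by
    funext x
    rw [hg, tsum_pointwise ψ hψtriv ξ x]
  rw [hfun, key]
  have hval : ∀ n : ℕ, ∫ x, g n x ∂μ
      = if ‖ξ‖ ≤ (p:ℝ) ^ ((n+1:ℕ):ℤ) then (((p:ℝ) ^ (-((n+1:ℕ):ℤ)) : ℝ) : ℂ) else 0 := fun n =>
    ball_int μ hμ ψ hψcont hψadd hψtriv hψnontriv ξ hξ (n+1)
  rw [tsum_congr hval]
  -- arithmetic
  set m : ℤ := ξ.valuation with hm
  have hξnorm : ‖ξ‖ = (p:ℝ) ^ (-m) := Padic.norm_eq_zpow_neg_valuation hξ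
  set t : ℕ := (-m-1).toNat with ht
  have hcond : ∀ n : ℕ, (‖ξ‖ ≤ (p:ℝ) ^ ((n+1:ℕ):ℤ)) ↔ t ≤ n := by
    intro n
    rw [hξnorm, zpow_le_zpow_iff_right₀ hp1]
    omega
  set f : ℕ → ℝ := fun n => if t ≤ n then (p:ℝ) ^ (-((n+1:ℕ):ℤ)) else 0 with hf
  have hterm : ∀ n : ℕ,
      (if ‖ξ‖ ≤ (p:ℝ) ^ ((n+1:ℕ):ℤ) then (((p:ℝ) ^ (-((n+1:ℕ):ℤ)) : ℝ) : ℂ) else 0)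
        = ((f n : ℝ) : ℂ) := by
    intro n
    rw [hf]
    by_cases h : t ≤ n
    · rw [if_pos ((hcond n).mpr h)]; simp [h]
    · rw [if_neg (fun hh => h ((hcond n).mp hh))]; simp [h]
  rw [tsum_congr hterm, ← Complex.ofReal_tsum f]
  congr 1
  -- now a real computation
  have hinv1 : (p:ℝ)⁻¹ < 1 := inv_lt_one_of_one_lt₀ hp1
  have hsummable : Summable f := by
    apply Summable.of_nonneg_of_le (fun n => ?_) (fun n => ?_)
      (summable_geometric_of_lt_one (by positivity) hinv1)
    · rw [hf]; dsimp only; split_ifs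
      · positivity
      · exact le_refl 0
    · rw [hf]; dsimp only; split_ifs
      · rw [← zpow_natCast ((p:ℝ)⁻¹) n, inv_zpow, ← zpow_neg]
        apply zpow_le_zpow_right₀ hp1.le
        omega
      · positivity
  have hshift : ∑' n, f n = ∑ i ∈ Finset.range t, f i + ∑' i, f (i + t) :=
    (Summable.sum_add_tsum_nat_add t hsummable).symm
  have hzero : ∑ i ∈ Finset.range t, f i = 0 := by
    apply Finset.sum_eq_zero
    intro i hi
    rw [hf]
    exact if_neg (by simpa using Finset.mem_range.mp hi)
  have htail : ∀ i : ℕ, f (i + t) = (p:ℝ) ^ (-((t:ℤ)+1)) * ((p:ℝ)⁻¹) ^ i := by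
    intro i
    rw [hf]
    dsimp only
    rw [if_pos (by omega)]
    rw [← zpow_natCast ((p:ℝ)⁻¹) i, inv_zpow, ← zpow_neg, ← zpow_add₀ hp0]
    congr 1
    push_cast
    ring
  have h1 : ∑' i : ℕ, f (i + t) = (p:ℝ) ^ (-((t:ℤ)+1)) * (1 - (p:ℝ)⁻¹)⁻¹ := by
    rw [tsum_congr htail]
    rw [_root_.tsum_mul_left]
    rw [tsum_geometric_of_lt_one (by positivity) hinv1]
  rw [hshift, hzero, zero_add, h1]
  have hmin : min (p:ℝ)⁻¹ ‖ξ‖⁻¹ = (p:ℝ) ^ (-((t:ℤ)+1)) := by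
    rw [hξnorm, ← zpow_neg, neg_neg]
    rcases le_or_gt 0 m with hm0 | hm0
    · have ht0 : t = 0 := by omega
      rw [ht0, min_eq_left]
      · norm_num
      · calc (p:ℝ)⁻¹ ≤ 1 := hinv1.le
          _ ≤ (p:ℝ) ^ m := one_le_zpow₀ hp1.le hm0
    · have htm : (t:ℤ) = -m-1 := by omega
      rw [min_eq_right, htm]
      · congr 1; ring
      · rw [show (p:ℝ)⁻¹ = (p:ℝ) ^ (-1:ℤ) by norm_num]
        apply zpow_le_zpow_right₀ hp1.le
        omega
  rw [hmin]
  ring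
end

section
/- Let p be a prime, m a natural number, and μ the Haar measure on Q_p with μ(Z_p) = 1. Then p^{−m} · ∫_{{u ∈ Q_p : 1 < |u|_p ≤ p^m}} (−val_p(u)) dμ(u) = m − 1/(p−1) + p^{−m}/(p−1). -/
open MeasureTheory

section Aux
variable (p : ℕ) [Fact p.Prime]

private lemma padic_one_lt : (1:ℝ) < (p:ℝ) := by
  exact_mod_cast (Fact.out : p.Prime).one_lt

private lemma padic_B_meas [MeasurableSpace ℚ_[p]] [BorelSpace ℚ_[p]] (i : ℤ) :
    MeasurableSet {x : ℚ_[p] | ‖x‖ ≤ (p:ℝ)^i} :=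
  (isClosed_le continuous_norm continuous_const).measurableSet

private lemma padic_coset_norm {i : ℕ} {a b : ℕ} (ha : a < p) (hb : b < p) (hab : a ≠ b) :
    ‖((a:ℚ_[p]) - b) * (p:ℚ_[p]) ^ (-((i:ℤ)+1))‖ = (p:ℝ) ^ ((i:ℤ)+1) := by
  have h1 : ‖((a:ℚ_[p]) - (b:ℚ_[p]))‖ = 1 := by
    have hint : ((a:ℚ_[p]) - b) = ((a - b : ℤ) : ℚ_[p]) := by push_cast; ring
    rw [hint]
    have hd : ¬ (p:ℤ) ∣ (a - b : ℤ) := by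
      intro h
      have h2 : (p:ℤ) ∣ |(a:ℤ) - b| := (dvd_abs _ _).mpr h
      have hne : (0:ℤ) < |(a:ℤ) - b| := abs_pos.mpr (by omega)
      have hle := Int.le_of_dvd hne h2
      have hlt : |(a:ℤ) - b| < p := abs_lt.mpr ⟨by omega, by omega⟩
      omega
    have hlt := (Padic.norm_intCast_lt_one_iff (p := p) (k := (a:ℤ) - b)).not.mpr hd
    have hle := Padic.norm_int_le_one (p := p) (a - b)
    linarith [lt_or_eq_of_le hle]
  rw [norm_mul, h1, Padic.norm_p_zpow, one_mul, neg_neg]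

private lemma padic_B_succ (i : ℕ) :
    {x : ℚ_[p] | ‖x‖ ≤ (p:ℝ)^((i:ℤ)+1)} = ⋃ a ∈ Finset.range p,
      (fun x => x - (a : ℚ_[p]) * (p : ℚ_[p]) ^ (-((i:ℤ)+1))) ⁻¹'
        {x : ℚ_[p] | ‖x‖ ≤ (p:ℝ)^(i:ℤ)} := by
  have hp1 : (1:ℝ) < p := padic_one_lt p
  have hp0 : (0:ℝ) < p := by linarith
  have hpc : (p : ℚ_[p]) ≠ 0 := by
    exact_mod_cast (Nat.cast_ne_zero (R := ℚ_[p])).mpr (Fact.out : p.Prime).ne_zero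
  ext x
  simp only [Set.mem_setOf_eq, Set.mem_iUnion, Finset.mem_range, Set.mem_preimage]
  constructor
  · intro hx
    set z : ℚ_[p] := x * (p : ℚ_[p]) ^ ((i:ℤ)+1) with hz
    have hznorm : ‖z‖ ≤ 1 := by
      rw [hz, norm_mul, Padic.norm_p_zpow]
      calc ‖x‖ * (p:ℝ) ^ (-((i:ℤ)+1)) ≤ (p:ℝ)^((i:ℤ)+1) * (p:ℝ) ^ (-((i:ℤ)+1)) := by
            apply mul_le_mul_of_nonneg_right hx (zpow_nonneg hp0.le _)
        _ = 1 := by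
            rw [← zpow_add₀ (ne_of_gt hp0), show ((i:ℤ)+1) + (-((i:ℤ)+1)) = 0 by ring,
              zpow_zero]
    set w : ℤ_[p] := ⟨z, hznorm⟩ with hw
    refine ⟨w.appr 1, by simpa using w.appr_lt 1, ?_⟩
    have hspec := PadicInt.appr_spec 1 w
    rw [Ideal.mem_span_singleton'] at hspec
    obtain ⟨t, ht⟩ := hspec
    have hnorm : ‖z - (w.appr 1 : ℚ_[p])‖ ≤ (p:ℝ)⁻¹ := by
      have : z - (w.appr 1 : ℚ_[p]) = ((t * (p:ℤ_[p])^1 : ℤ_[p]) : ℚ_[p]) := by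
        rw [ht, PadicInt.coe_sub, PadicInt.coe_natCast]
      rw [this]
      push_cast
      rw [norm_mul, pow_one, Padic.norm_p]
      calc ‖(t:ℚ_[p])‖ * (p:ℝ)⁻¹ ≤ 1 * (p:ℝ)⁻¹ := by
            apply mul_le_mul_of_nonneg_right (PadicInt.norm_le_one t)
            positivity
        _ = (p:ℝ)⁻¹ := one_mul _
    have hxz : x - (w.appr 1 : ℚ_[p]) * (p:ℚ_[p]) ^ (-((i:ℤ)+1))
        = (z - (w.appr 1 : ℚ_[p])) * (p:ℚ_[p]) ^ (-((i:ℤ)+1)) := by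
      rw [hz, sub_mul, mul_assoc, ← zpow_add₀ hpc,
        show ((i:ℤ)+1) + (-((i:ℤ)+1)) = 0 by ring, zpow_zero, mul_one]
    rw [hxz, norm_mul, Padic.norm_p_zpow, neg_neg]
    calc ‖z - (w.appr 1 : ℚ_[p])‖ * (p:ℝ)^((i:ℤ)+1)
        ≤ (p:ℝ)⁻¹ * (p:ℝ)^((i:ℤ)+1) := by
          apply mul_le_mul_of_nonneg_right hnorm (zpow_nonneg hp0.le _)
      _ = (p:ℝ)^(i:ℤ) := by
          rw [← zpow_neg_one, ← zpow_add₀ (ne_of_gt hp0),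
            show (-1 + ((i:ℤ)+1)) = (i:ℤ) by ring]
  · rintro ⟨a, ha, hax⟩
    have hca : ‖(a : ℚ_[p]) * (p:ℚ_[p]) ^ (-((i:ℤ)+1))‖ ≤ (p:ℝ)^((i:ℤ)+1) := by
      rw [norm_mul, Padic.norm_p_zpow, neg_neg]
      have : ‖(a:ℚ_[p])‖ ≤ 1 := by
        have := Padic.norm_int_le_one (p := p) a; exact_mod_cast this
      calc ‖(a:ℚ_[p])‖ * (p:ℝ)^((i:ℤ)+1) ≤ 1 * (p:ℝ)^((i:ℤ)+1) := by
            apply mul_le_mul_of_nonneg_right this (zpow_nonneg hp0.le _)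
        _ = _ := one_mul _
    have hxe : x = (x - (a : ℚ_[p]) * (p:ℚ_[p]) ^ (-((i:ℤ)+1)))
        + (a : ℚ_[p]) * (p:ℚ_[p]) ^ (-((i:ℤ)+1)) := by ring
    have hmax : ‖x‖ ≤ max ‖x - (a : ℚ_[p]) * (p:ℚ_[p]) ^ (-((i:ℤ)+1))‖
        ‖(a : ℚ_[p]) * (p:ℚ_[p]) ^ (-((i:ℤ)+1))‖ := by
      conv_lhs => rw [hxe]
      exact Padic.nonarchimedean _ _
    refine le_trans hmax (max_le ?_ hca)
    exact le_trans hax (zpow_le_zpow_right₀ hp1.le (by omega))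

private lemma padic_B_measure [MeasurableSpace ℚ_[p]] [BorelSpace ℚ_[p]]
    (μ : Measure ℚ_[p]) [μ.IsAddHaarMeasure]
    (hμ : μ {x : ℚ_[p] | ‖x‖ ≤ 1} = 1) (i : ℕ) :
    μ {x : ℚ_[p] | ‖x‖ ≤ (p:ℝ)^(i:ℤ)} = (p:ENNReal)^i := by
  induction i with
  | zero => simpa using hμ
  | succ i ih =>
    have hstep : μ {x : ℚ_[p] | ‖x‖ ≤ (p:ℝ)^((i:ℤ)+1)} = p * μ {x : ℚ_[p] | ‖x‖ ≤ (p:ℝ)^(i:ℤ)} := by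
      rw [padic_B_succ p i]
      rw [measure_biUnion_finset ?_ ?_]
      · rw [Finset.sum_congr rfl (fun a _ => ?_), Finset.sum_const, Finset.card_range,
          nsmul_eq_mul]
        have hfun : (fun x : ℚ_[p] => x - (a : ℚ_[p]) * (p : ℚ_[p]) ^ (-((i:ℤ)+1)))
            = (fun x : ℚ_[p] => x + -((a : ℚ_[p]) * (p : ℚ_[p]) ^ (-((i:ℤ)+1)))) := by
          funext x; ring
        rw [hfun, measure_preimage_add_right]
      · intro a ha b hb hab
        simp only [Finset.coe_range, Set.mem_Iio] at ha hb
        refine Set.disjoint_left.mpr (fun x hxa hxb => ?_)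
        simp only [Set.mem_preimage, Set.mem_setOf_eq] at hxa hxb
        have hkey : ‖((a:ℚ_[p]) - b) * (p:ℚ_[p]) ^ (-((i:ℤ)+1))‖ ≤ (p:ℝ)^(i:ℤ) := by
          have hdiff : ((a:ℚ_[p]) - b) * (p:ℚ_[p]) ^ (-((i:ℤ)+1))
              = (x - (b:ℚ_[p]) * (p:ℚ_[p]) ^ (-((i:ℤ)+1)))
                - (x - (a:ℚ_[p]) * (p:ℚ_[p]) ^ (-((i:ℤ)+1))) := by ring
          rw [hdiff, sub_eq_add_neg]
          refine le_trans (Padic.nonarchimedean _ _) ?_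
          rw [norm_neg]
          exact max_le hxb hxa
        rw [padic_coset_norm p ha hb hab] at hkey
        have := lt_of_lt_of_le (zpow_lt_zpow_right₀ (padic_one_lt p) (by omega : (i:ℤ) < (i:ℤ)+1)) hkey
        exact lt_irrefl _ this
      · intro a _
        exact (padic_B_meas p (i:ℤ)).preimage (measurable_id.sub_const _)
    rw [show ((i:ℕ)+1 : ℕ) = i+1 from rfl] at *
    rw [show (((i+1 : ℕ)):ℤ) = (i:ℤ)+1 by push_cast; ring, hstep, ih, pow_succ]
    ring

private lemma padic_shell_eq (j : ℕ) :
    {u : ℚ_[p] | ‖u‖ = (p:ℝ)^((j:ℤ)+1)}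
      = {x : ℚ_[p] | ‖x‖ ≤ (p:ℝ)^(((j+1:ℕ)):ℤ)}  \ {x : ℚ_[p] | ‖x‖ ≤ (p:ℝ)^((j:ℕ):ℤ)} := by
  have hp1 : (1:ℝ) < p := padic_one_lt p
  ext x
  simp only [Set.mem_setOf_eq, Set.mem_diff, not_le]
  constructor
  · intro h
    rw [h]
    exact ⟨le_refl _, zpow_lt_zpow_right₀ hp1 (by omega)⟩
  · rintro ⟨h1, h2⟩
    have hx0 : x ≠ 0 := by
      intro h; rw [h, norm_zero] at h2; exact absurd h2 (not_lt.mpr (zpow_nonneg (by positivity) _))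
    rw [Padic.norm_eq_zpow_neg_valuation hx0] at h1 h2 ⊢
    have hlt : (j:ℤ) < -x.valuation := (zpow_lt_zpow_iff_right₀ hp1).mp h2
    have hle : -x.valuation ≤ (j:ℤ)+1 := (zpow_le_zpow_iff_right₀ hp1).mp h1
    congr 1
    omega

private lemma padic_shell_val {j : ℕ} {u : ℚ_[p]} (h : ‖u‖ = (p:ℝ)^((j:ℤ)+1)) :
    -(u.valuation : ℝ) = (j:ℝ)+1 := by
  have hp1 : (1:ℝ) < p := padic_one_lt p
  have hu0 : u ≠ 0 := by
    intro h0; rw [h0, norm_zero] at h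
    have : (0:ℝ) < (p:ℝ)^((j:ℤ)+1) := zpow_pos (by linarith) _
    linarith
  rw [Padic.norm_eq_zpow_neg_valuation hu0] at h
  have := zpow_right_injective₀ (by linarith : (0:ℝ) < (p:ℝ)) (by linarith : (p:ℝ) ≠ 1) h
  have : -u.valuation = (j:ℤ)+1 := by omega
  exact_mod_cast congrArg (Int.cast : ℤ → ℝ) this

private lemma padic_sum_identity (x : ℝ) (hx : x ≠ 1) (m : ℕ) :
    ∑ j ∈ Finset.range m, ((j:ℝ)+1) * (x^(j+1) - x^j)
      = m * x^m - (x^m - 1)/(x-1) := by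
  have hx1 : x - 1 ≠ 0 := sub_ne_zero.mpr hx
  induction m with
  | zero => simp
  | succ m ih =>
    rw [Finset.sum_range_succ, ih]
    field_simp
    push_cast
    ring

end Aux

/-- For a prime `p`, `m : ℕ` and the Haar measure `μ` on `ℚ_p` with
`μ(ℤ_p) = 1`, one has
`p^{−m} · ∫_{{u : 1 < |u| ≤ p^m}} (−val_p(u)) dμ(u) = m − 1/(p−1) + p^{−m}/(p−1)`. -/
theorem stmt_17 (p : ℕ) [Fact p.Prime] (m : ℕ)
    [MeasurableSpace ℚ_[p]] [BorelSpace ℚ_[p]]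
    (μ : Measure ℚ_[p]) [μ.IsAddHaarMeasure]
    (hμ : μ {x : ℚ_[p] | ‖x‖ ≤ 1} = 1) :
    (p : ℝ) ^ (-(m : ℤ)) *
        ∫ u in {u : ℚ_[p] | 1 < ‖u‖ ∧ ‖u‖ ≤ (p : ℝ) ^ (m : ℤ)},
          (-(u.valuation : ℝ)) ∂μ =
      (m : ℝ) - 1 / ((p : ℝ) - 1) + (p : ℝ) ^ (-(m : ℤ)) / ((p : ℝ) - 1) := by
  classical
  have hp1 : (1:ℝ) < p := padic_one_lt p
  have hp0 : (0:ℝ) < p := by linarith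
  set S : ℕ → Set ℚ_[p] := fun j => {u : ℚ_[p] | ‖u‖ = (p:ℝ)^((j:ℤ)+1)} with hS
  -- shell measurability
  have hSmeas : ∀ j, MeasurableSet (S j) := fun j =>
    (isClosed_eq continuous_norm continuous_const).measurableSet
  -- shell measure
  have hμB : ∀ i : ℕ, μ {x : ℚ_[p] | ‖x‖ ≤ (p:ℝ)^(i:ℤ)} = (p:ENNReal)^i :=
    padic_B_measure p μ hμ
  have hBfin : ∀ i : ℕ, μ {x : ℚ_[p] | ‖x‖ ≤ (p:ℝ)^(i:ℤ)} ≠ ⊤ := by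
    intro i; rw [hμB i]
    exact ENNReal.pow_ne_top (ENNReal.natCast_ne_top p)
  have hsub : ∀ j : ℕ, {x : ℚ_[p] | ‖x‖ ≤ (p:ℝ)^((j:ℕ):ℤ)}
      ⊆ {x : ℚ_[p] | ‖x‖ ≤ (p:ℝ)^(((j+1:ℕ)):ℤ)} := by
    intro j x hx
    exact le_trans hx (zpow_le_zpow_right₀ hp1.le (by exact_mod_cast Nat.le_succ j))
  have hμS : ∀ j : ℕ, μ (S j) = (p:ENNReal)^(j+1) - (p:ENNReal)^j := by
    intro j
    rw [hS]
    simp only []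
    rw [padic_shell_eq p j, measure_diff (hsub j)
      ((padic_B_meas p ((j:ℕ):ℤ)).nullMeasurableSet) (hBfin j), hμB, hμB]
  have hμS_real : ∀ j : ℕ, (μ (S j)).toReal = (p:ℝ)^(j+1) - (p:ℝ)^j := by
    intro j
    have h1p : (1:ENNReal) ≤ (p:ENNReal) := by
      exact_mod_cast Nat.one_le_cast.mpr (Fact.out : p.Prime).one_lt.le
    have hle : (p:ENNReal)^j ≤ (p:ENNReal)^(j+1) := by
      calc (p:ENNReal)^j = (p:ENNReal)^j * 1 := (mul_one _).symm
        _ ≤ (p:ENNReal)^j * p := by gcongr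
        _ = (p:ENNReal)^(j+1) := (pow_succ _ _).symm
    rw [hμS j, ENNReal.toReal_sub_of_le hle (ENNReal.pow_ne_top (ENNReal.natCast_ne_top p))]
    simp [ENNReal.toReal_pow]
  have hA : {u : ℚ_[p] | 1 < ‖u‖ ∧ ‖u‖ ≤ (p : ℝ) ^ (m : ℤ)} = ⋃ j ∈ Finset.range m, S j := by
    ext x
    simp only [Set.mem_setOf_eq, Set.mem_iUnion, Finset.mem_range, hS]
    constructor
    · rintro ⟨h1, h2⟩
      have hx0 : x ≠ 0 := by intro h; rw [h, norm_zero] at h1; linarith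
      rw [Padic.norm_eq_zpow_neg_valuation hx0] at h1 h2 ⊢
      have hlt : (0:ℤ) < -x.valuation := by
        have h1' : (p:ℝ)^(0:ℤ) < (p:ℝ)^(-x.valuation) := by simpa using h1
        exact (zpow_lt_zpow_iff_right₀ hp1).mp h1'
      have hle : -x.valuation ≤ (m:ℤ) := (zpow_le_zpow_iff_right₀ hp1).mp h2
      refine ⟨(-x.valuation).toNat - 1, by omega, ?_⟩
      congr 1
      omega
    · rintro ⟨j, hj, hx⟩
      rw [hx]
      refine ⟨?_, zpow_le_zpow_right₀ hp1.le (by omega)⟩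
      calc (1:ℝ) = (p:ℝ)^(0:ℤ) := by simp
        _ < (p:ℝ)^((j:ℤ)+1) := zpow_lt_zpow_right₀ hp1 (by omega)
  have hInt : ∀ j : ℕ, IntegrableOn (fun u : ℚ_[p] => -(u.valuation : ℝ)) (S j) μ := by
    intro j
    have hconst : IntegrableOn (fun _ : ℚ_[p] => ((j:ℝ)+1)) (S j) μ := by
      refine (integrableOn_const_iff (C := ((j:ℝ)+1))).mpr (Or.inr ?_)
      rw [hμS j]
      exact lt_of_le_of_lt (tsub_le_self) (ENNReal.pow_lt_top (ENNReal.natCast_lt_top p))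
    exact hconst.congr_fun (fun x hx => (padic_shell_val p hx).symm) (hSmeas j)
  have hdisj : (↑(Finset.range m) : Set ℕ).Pairwise (Function.onFun Disjoint S) := by
    intro a _ b _ hab
    refine Set.disjoint_left.mpr fun x hxa hxb => ?_
    rw [hS] at hxa hxb
    simp only [Set.mem_setOf_eq] at hxa hxb
    have heq : (p:ℝ)^((a:ℤ)+1) = (p:ℝ)^((b:ℤ)+1) := hxa ▸ hxb
    have := zpow_right_injective₀ (by linarith : (0:ℝ) < (p:ℝ)) (by linarith : (p:ℝ) ≠ 1) heq
    omega
  have hIj : ∀ j : ℕ, ∫ u in S j, (-(u.valuation : ℝ)) ∂μ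
      = ((j:ℝ)+1) * ((p:ℝ)^(j+1) - (p:ℝ)^j) := by
    intro j
    rw [setIntegral_congr_fun (hSmeas j)
      (fun x hx => padic_shell_val p (hx : ‖x‖ = (p:ℝ)^((j:ℤ)+1))),
      setIntegral_const, measureReal_def, hμS_real j, smul_eq_mul]
    ring
  rw [hA, integral_biUnion_finset (Finset.range m) (fun j _ => hSmeas j) hdisj
    (fun j _ => hInt j), Finset.sum_congr rfl (fun j _ => hIj j),
    padic_sum_identity (p:ℝ) (by linarith) m]
  have hzpow : (p:ℝ)^(-(m:ℤ)) = ((p:ℝ)^m)⁻¹ := by rw [zpow_neg, zpow_natCast]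
  rw [hzpow]
  have hpm : (p:ℝ)^m ≠ 0 := by positivity
  have hps : (p:ℝ) - 1 ≠ 0 := by linarith
  field_simp
  ring
end

section
/- Let p be an odd prime, μ the Haar probability measure on Z_p, and η ∈ Z_p a nonzero element of odd valuation 2m+1. Then (1 + p^{−1})^{−1} · ∫_{x ∈ Z_p} ( ∫_{{y ∈ Z_p : |η − x²|_p ≤ |y|_p}} |y|_p^{−1} dμ(y) ) dμ(x) = 1 − p^{−(m+1)}. -/
open MeasureTheory Finset

namespace Stmt19

variable {p : ℕ} [hp : Fact p.Prime]

/-- closed ball of radius `p^{-n}` in `ℤ_p`. -/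
def B (p : ℕ) [Fact p.Prime] (n : ℕ) : Set ℤ_[p] := {x | ‖x‖ ≤ (p : ℝ) ^ (-(n : ℤ))}

/-- sphere of radius `p^{-v}` in `ℤ_p`. -/
def Sph (p : ℕ) [Fact p.Prime] (v : ℕ) : Set ℤ_[p] := {x | ‖x‖ = (p : ℝ) ^ (-(v : ℤ))}

lemma hp1 : (1 : ℝ) < p := by exact_mod_cast hp.out.one_lt

lemma mem_B_iff {n : ℕ} {x : ℤ_[p]} :
    x ∈ B p n ↔ x ∈ (Ideal.span {(p : ℤ_[p]) ^ n} : Ideal ℤ_[p]) :=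
  PadicInt.norm_le_pow_iff_mem_span_pow x n

lemma Sph_eq_diff (v : ℕ) : Sph p v = B p v \ B p (v + 1) := by
  ext x
  have hlt : ((p : ℝ)) ^ (-(v + 1 : ℕ) : ℤ) < (p : ℝ) ^ (-(v : ℤ)) := by
    apply zpow_lt_zpow_right₀ hp1
    omega
  constructor
  · rintro (hx : ‖x‖ = _)
    refine ⟨le_of_eq hx, fun hx' => ?_⟩
    exact absurd (lt_of_le_of_lt (hx ▸ hx') hlt) (lt_irrefl _)
  · rintro ⟨hx1, hx2⟩
    have h3 : ¬ ‖x‖ < (p : ℝ) ^ (-(v : ℤ)) := by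
      intro h
      apply hx2
      show ‖x‖ ≤ _
      rw [PadicInt.norm_le_pow_iff_norm_lt_pow_add_one]
      have : (-(v + 1 : ℕ) : ℤ) + 1 = (-(v : ℤ)) := by push_cast; ring
      rwa [this]
    exact le_antisymm hx1 (not_lt.1 h3)

/-- every point is on a sphere of index `< N` or in the ball `B N` -/
lemma sphere_or_ball (N : ℕ) (x : ℤ_[p]) :
    (∃ v < N, x ∈ Sph p v) ∨ x ∈ B p N := by
  by_cases hx0 : x = 0
  · right; subst hx0
    show ‖(0 : ℤ_[p])‖ ≤ _
    rw [norm_zero]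
    positivity
  by_cases hxB : x ∈ B p N
  · right; exact hxB
  left
  have hnn := Nat.zero_le x.valuation
  refine ⟨x.valuation, ?_, ?_⟩
  · by_contra h
    apply hxB
    show ‖x‖ ≤ _
    rw [PadicInt.norm_eq_zpow_neg_valuation hx0]
    apply zpow_le_zpow_right₀ (le_of_lt hp1)
    omega
  · show ‖x‖ = _
    rw [PadicInt.norm_eq_zpow_neg_valuation hx0]

lemma not_mem_B_of_sphere {N v : ℕ} (hv : v < N) {x : ℤ_[p]} (hx : x ∈ Sph p v) :
    x ∉ B p N := fun hB => by
  have h : (p:ℝ) ^ (-(v:ℤ)) ≤ (p:ℝ) ^ (-(N:ℤ)) := le_of_le_of_eq (hx ▸ hB) rfl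
  rw [zpow_le_zpow_iff_right₀ hp1] at h
  omega

lemma sphere_disjoint {v w : ℕ} (hvw : v ≠ w) {x : ℤ_[p]} (hx : x ∈ Sph p v) :
    x ∉ Sph p w := fun hw => by
  have h : (p:ℝ) ^ (-(v:ℤ)) = (p:ℝ) ^ (-(w:ℤ)) := by rw [← hx, hw]
  have := zpow_right_injective₀ (lt_trans one_pos hp1) (ne_of_gt hp1) h
  omega

variable [MeasurableSpace ℤ_[p]] [BorelSpace ℤ_[p]]

lemma measurableSet_B (n : ℕ) : MeasurableSet (B p n) :=
  (isClosed_le continuous_norm continuous_const).measurableSet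

lemma measurableSet_Sph (v : ℕ) : MeasurableSet (Sph p v) :=
  (isClosed_eq continuous_norm continuous_const).measurableSet

variable (μ : Measure ℤ_[p]) [μ.IsAddHaarMeasure]

lemma measure_B (hμ : μ Set.univ = 1) (n : ℕ) :
    μ (B p n) = ((p : ENNReal) ^ n)⁻¹ := by
  haveI : NeZero (p ^ n) := ⟨(pow_pos hp.out.pos n).ne'⟩
  set C : ℕ → Set ℤ_[p] := fun r => (fun x => -(r : ℤ_[p]) + x) ⁻¹' B p n with hC
  have hmemC : ∀ (r : ℕ) (x : ℤ_[p]),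
      x ∈ C r ↔ x - (r : ℤ_[p]) ∈ (Ideal.span {(p : ℤ_[p]) ^ n} : Ideal ℤ_[p]) := by
    intro r x
    rw [hC]
    simp only [Set.mem_preimage, mem_B_iff, neg_add_eq_sub]
  have hcover : Set.univ = ⋃ r ∈ Finset.range (p ^ n), C r := by
    ext x
    simp only [Set.mem_univ, Set.mem_iUnion, true_iff]
    exact ⟨x.appr n, by simpa using x.appr_lt n, (hmemC _ x).2 (x.appr_spec n)⟩
  have hdisj : (↑(Finset.range (p ^ n)) : Set ℕ).PairwiseDisjoint C := by
    intro r hr s hs hrs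
    simp only [Finset.coe_range, Set.mem_Iio] at hr hs
    refine Set.disjoint_left.2 fun x hxr hxs => hrs ?_
    have h1 := (hmemC r x).1 hxr
    have h2 := (hmemC s x).1 hxs
    have := PadicInt.zmod_congr_of_sub_mem_span n x r s h1 h2
    calc r = (r : ZMod (p ^ n)).val := (ZMod.val_cast_of_lt hr).symm
    _ = (s : ZMod (p ^ n)).val := by rw [this]
    _ = s := ZMod.val_cast_of_lt hs
  have hmeas : ∀ r ∈ Finset.range (p ^ n), MeasurableSet (C r) :=
    fun r _ => (measurableSet_B n).preimage (measurable_const_add _)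
  have hCmeas : ∀ r : ℕ, μ (C r) = μ (B p n) := fun r =>
    measure_preimage_add μ _ _
  have h1 : (1 : ENNReal) = (p ^ n : ℕ) * μ (B p n) := by
    calc (1 : ENNReal) = μ Set.univ := hμ.symm
    _ = μ (⋃ r ∈ Finset.range (p ^ n), C r) := by rw [← hcover]
    _ = ∑ r ∈ Finset.range (p ^ n), μ (C r) := measure_biUnion_finset hdisj hmeas
    _ = ∑ _r ∈ Finset.range (p ^ n), μ (B p n) := Finset.sum_congr rfl fun r _ => hCmeas r
    _ = (p ^ n : ℕ) * μ (B p n) := by rw [Finset.sum_const, Finset.card_range, nsmul_eq_mul]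
  have hc0 : ((p ^ n : ℕ) : ENNReal) ≠ 0 := by
    exact_mod_cast (Nat.pos_of_ne_zero (NeZero.ne _)).ne'
  have hctop : ((p ^ n : ℕ) : ENNReal) ≠ ⊤ := ENNReal.natCast_ne_top _
  have := congrArg (fun z => (((p ^ n : ℕ) : ENNReal))⁻¹ * z) h1
  simp only [mul_one] at this
  rw [← mul_assoc, ENNReal.inv_mul_cancel hc0 hctop, one_mul] at this
  rw [← this]
  push_cast
  rfl

lemma measure_B_toReal (hμ : μ Set.univ = 1) (n : ℕ) :
    (μ (B p n)).toReal = (p : ℝ) ^ (-(n : ℤ)) := by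
  rw [measure_B μ hμ n]
  rw [zpow_neg, zpow_natCast]
  simp [ENNReal.toReal_inv]

lemma measure_Sph (hμ : μ Set.univ = 1) (v : ℕ) :
    (μ (Sph p v)).toReal = (p : ℝ) ^ (-(v : ℤ)) - (p : ℝ) ^ (-(v : ℤ) - 1) := by
  haveI : IsFiniteMeasure μ := ⟨by rw [hμ]; exact ENNReal.one_lt_top⟩
  have hsub : B p (v + 1) ⊆ B p v := by
    intro x hx
    exact le_trans hx (le_of_lt (zpow_lt_zpow_right₀ hp1 (by omega)))
  rw [Sph_eq_diff, measure_diff hsub (measurableSet_B (p := p) (v+1)).nullMeasurableSet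
      (measure_ne_top μ _)]
  rw [ENNReal.toReal_sub_of_le (measure_mono hsub) (measure_ne_top μ _)]
  have h1 : (μ (B p v)).toReal = (p : ℝ) ^ (-(v : ℤ)) := measure_B_toReal μ hμ v
  have h2 : (μ (B p (v+1))).toReal = (p : ℝ) ^ (-(v : ℤ) - 1) := by
    rw [measure_B_toReal μ hμ]
    congr 1
    push_cast; ring
  rw [h1, h2]

lemma integral_locally_const (hμ : μ Set.univ = 1) (N : ℕ) (g : ℤ_[p] → ℝ) (c : ℕ → ℝ)
    (h1 : ∀ v < N, ∀ x ∈ Sph p v, g x = c v)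
    (h2 : ∀ x ∈ B p N, g x = c N) :
    ∫ x, g x ∂μ =
      (∑ v ∈ Finset.range N, c v * ((p:ℝ) ^ (-(v:ℤ)) - (p:ℝ) ^ (-(v:ℤ) - 1)))
        + c N * (p:ℝ) ^ (-(N:ℤ)) := by
  haveI : IsFiniteMeasure μ := ⟨by rw [hμ]; exact ENNReal.one_lt_top⟩
  have hg : g = fun x =>
      (∑ v ∈ Finset.range N, Set.indicator (Sph p v) (fun _ => c v) x)
        + Set.indicator (B p N) (fun _ => c N) x := by
    funext x
    rcases sphere_or_ball N x with ⟨v0, hv0, hx⟩ | hx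
    · rw [Finset.sum_eq_single v0]
      · rw [Set.indicator_of_mem hx, Set.indicator_of_notMem (not_mem_B_of_sphere hv0 hx),
          add_zero]
        exact h1 v0 hv0 x hx
      · intro v hv hne
        exact Set.indicator_of_notMem (fun (h : x ∈ Sph p v) => sphere_disjoint hne h hx) _
      · intro h; exact absurd (Finset.mem_range.2 hv0) h
    · have : ∀ v ∈ Finset.range N, Set.indicator (Sph p v) (fun _ => c v) x = 0 := by
        intro v hv
        exact Set.indicator_of_notMem
          (fun h => not_mem_B_of_sphere (Finset.mem_range.1 hv) h hx) _
      rw [Finset.sum_congr rfl this, Finset.sum_const, smul_zero, zero_add,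
        Set.indicator_of_mem hx]
      exact h2 x hx
  rw [hg]
  have hint : ∀ v : ℕ, Integrable (Set.indicator (Sph p v) (fun _ => c v)) μ :=
    fun v => (integrable_const (c v)).indicator (measurableSet_Sph v)
  have hintB : Integrable (Set.indicator (B p N) (fun _ => c N)) μ :=
    (integrable_const (c N)).indicator (measurableSet_B N)
  rw [integral_add (integrable_finset_sum _ (fun v _ => hint v)) hintB,
    integral_finset_sum _ (fun v _ => hint v)]
  have hiv : ∀ v : ℕ, ∫ x, Set.indicator (Sph p v) (fun _ => c v) x ∂μ
      = (μ (Sph p v)).toReal * c v := by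
    intro v
    rw [integral_indicator_const _ (measurableSet_Sph v), smul_eq_mul, measureReal_def]
  have hiB : ∫ x, Set.indicator (B p N) (fun _ => c N) x ∂μ = (μ (B p N)).toReal * c N := by
    rw [integral_indicator_const _ (measurableSet_B N), smul_eq_mul, measureReal_def]
  rw [hiB, measure_B_toReal μ hμ]
  congr 1
  · refine Finset.sum_congr rfl fun v _ => ?_
    rw [hiv v, measure_Sph μ hμ, mul_comm]
  · ring

/-- the inner integral -/
lemma inner_integral (hμ : μ Set.univ = 1) (k : ℕ) :
    ∫ y in {y : ℤ_[p] | (p:ℝ) ^ (-(k:ℤ)) ≤ ‖y‖}, ‖y‖⁻¹ ∂μ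
      = ((k : ℝ) + 1) * (1 - (p:ℝ)⁻¹) := by
  have hp0 : (0:ℝ) < p := lt_trans one_pos hp1
  set S : Set ℤ_[p] := {y | (p:ℝ) ^ (-(k:ℤ)) ≤ ‖y‖} with hS
  have hSm : MeasurableSet S :=
    (isClosed_le continuous_const continuous_norm).measurableSet
  rw [← integral_indicator hSm]
  rw [integral_locally_const μ hμ (k+1) _ (fun v => if v ≤ k then (p:ℝ)^v else 0)]
  · rw [if_neg (by omega), zero_mul, add_zero]
    have : ∀ v ∈ Finset.range (k+1),
        (if v ≤ k then (p:ℝ)^v else 0) * ((p:ℝ) ^ (-(v:ℤ)) - (p:ℝ) ^ (-(v:ℤ) - 1))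
          = 1 - (p:ℝ)⁻¹ := by
      intro v hv
      rw [if_pos (by simp at hv; omega)]
      rw [← zpow_natCast (p:ℝ) v, mul_sub, ← zpow_add₀ (ne_of_gt hp0),
        ← zpow_add₀ (ne_of_gt hp0), add_neg_cancel, zpow_zero]
      congr 1
      rw [show (v:ℤ) + (-(v:ℤ) - 1) = -1 by ring, zpow_neg_one]
    rw [Finset.sum_congr rfl this, Finset.sum_const, Finset.card_range, nsmul_eq_mul]
    push_cast; ring
  · intro v hv x hx
    rw [if_pos (by omega)]
    have hxS : x ∈ S := by
      rw [hS]
      show (p:ℝ) ^ (-(k:ℤ)) ≤ ‖x‖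
      rw [hx]
      apply zpow_le_zpow_right₀ (le_of_lt hp1)
      omega
    rw [Set.indicator_of_mem hxS, hx, ← zpow_natCast (p:ℝ) v, ← zpow_neg, neg_neg]
  · intro x hx
    have hxS : x ∉ S := by
      rw [hS]
      simp only [Set.mem_setOf_eq, not_le]
      calc ‖x‖ ≤ (p:ℝ) ^ (-(k+1:ℕ):ℤ) := hx
      _ < (p:ℝ) ^ (-(k:ℤ)) := by apply zpow_lt_zpow_right₀ hp1; omega
    rw [Set.indicator_of_notMem hxS, if_neg (by omega)]

/-- algebra -/
lemma alg (q : ℝ) (m : ℕ) :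
    (∑ v ∈ Finset.range (m+1), ((2*(v:ℝ)+1)*(1-q)) * (q^v - q^(v+1)))
      + ((2*(m:ℝ)+2)*(1-q)) * q^(m+1) = (1+q) * (1 - q^(m+1)) := by
  induction m with
  | zero => simp; ring
  | succ n ih =>
    rw [Finset.sum_range_succ]
    push_cast
    push_cast at ih
    linear_combination ih

end Stmt19

open Stmt19 in
/-- For an odd prime `p`, a Haar probability measure `μ` on `ℤ_p`, and a
nonzero `η ∈ ℤ_p` of odd valuation `2m+1`,
`(1 + p⁻¹)⁻¹ · ∫_x ( ∫_{{y : |η − x²| ≤ |y|}} |y|⁻¹ dμ ) dμ = 1 − p^{−(m+1)}`. -/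
theorem stmt_19 (p : ℕ) [Fact p.Prime] (hodd : p ≠ 2)
    [MeasurableSpace ℤ_[p]] [BorelSpace ℤ_[p]]
    (μ : Measure ℤ_[p]) [μ.IsAddHaarMeasure] (hμ : μ Set.univ = 1)
    (η : ℤ_[p]) (hη : η ≠ 0) (m : ℕ) (hval : η.valuation = 2 * m + 1) :
    (1 + (p : ℝ)⁻¹)⁻¹ *
        ∫ x : ℤ_[p], (∫ y in {y : ℤ_[p] | ‖η - x ^ 2‖ ≤ ‖y‖}, ‖y‖⁻¹ ∂μ) ∂μ =
      1 - (p : ℝ) ^ (-((m : ℤ) + 1)) := by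
  have hp1 : (1:ℝ) < p := hp1
  have hp0 : (0:ℝ) < p := lt_trans one_pos hp1
  have hηnorm : ‖η‖ = (p:ℝ) ^ (-(2*(m:ℤ)+1)) := by
    rw [PadicInt.norm_eq_zpow_neg_valuation hη, hval, Nat.cast_add, Nat.cast_mul, Nat.cast_ofNat,
      Nat.cast_one]
  set q : ℝ := (p:ℝ)⁻¹ with hq
  have hqv : ∀ v : ℕ, (p:ℝ) ^ (-(v:ℤ)) = q ^ v := by
    intro v
    rw [zpow_neg, zpow_natCast, hq, inv_pow]
  -- value of the inner integral on spheres
  have hSph : ∀ v, v < m + 1 → ∀ x ∈ Sph p v,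
      (∫ y in {y : ℤ_[p] | ‖η - x ^ 2‖ ≤ ‖y‖}, ‖y‖⁻¹ ∂μ)
        = (if v ≤ m then 2*(v:ℝ)+1 else 2*(m:ℝ)+2) * (1 - (p:ℝ)⁻¹) := by
    intro v hv x hx
    have hx2 : ‖x ^ 2‖ = (p:ℝ) ^ (-(2*(v:ℤ))) := by
      rw [norm_pow, hx, ← zpow_natCast ((p:ℝ) ^ (-(v:ℤ))) 2, ← zpow_mul]
      congr 1
      ring
    have hne : ‖η‖ ≠ ‖-(x ^ 2)‖ := by
      rw [norm_neg, hηnorm, hx2]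
      intro h
      have := zpow_right_injective₀ hp0 (ne_of_gt hp1) h
      omega
    have hkey : ‖η - x ^ 2‖ = (p:ℝ) ^ (-((2*v : ℕ) : ℤ)) := by
      rw [sub_eq_add_neg, PadicInt.norm_add_eq_max_of_ne hne, norm_neg, hηnorm, hx2]
      rw [max_eq_right]
      · first
        | (congr 1; push_cast; ring)
        | congr 1
      · apply le_of_lt
        apply zpow_lt_zpow_right₀ hp1
        omega
    rw [hkey, inner_integral μ hμ (2*v), if_pos (by omega)]
    push_cast
    ring
  have hBall : ∀ x ∈ B p (m+1),
      (∫ y in {y : ℤ_[p] | ‖η - x ^ 2‖ ≤ ‖y‖}, ‖y‖⁻¹ ∂μ)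
        = (if m+1 ≤ m then 2*((m+1:ℕ):ℝ)+1 else 2*(m:ℝ)+2) * (1 - (p:ℝ)⁻¹) := by
    intro x hx
    have hx2 : ‖x ^ 2‖ ≤ (p:ℝ) ^ (-(2*(m:ℤ)+2)) := by
      rw [norm_pow]
      calc ‖x‖ ^ 2 ≤ ((p:ℝ) ^ (-((m:ℤ)+1))) ^ 2 := by
            apply pow_le_pow_left₀ (norm_nonneg x)
            first
              | exact hx
              | (convert hx using 2; push_cast; ring)
      _ = (p:ℝ) ^ (-(2*(m:ℤ)+2)) := by
            rw [← zpow_natCast ((p:ℝ) ^ (-((m:ℤ)+1))) 2, ← zpow_mul]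
            first
              | (congr 1; ring)
              | congr 1
    have hlt : ‖x ^ 2‖ < ‖η‖ := by
      rw [hηnorm]
      calc ‖x ^ 2‖ ≤ (p:ℝ) ^ (-(2*(m:ℤ)+2)) := hx2
      _ < (p:ℝ) ^ (-(2*(m:ℤ)+1)) := by apply zpow_lt_zpow_right₀ hp1; omega
    have hne : ‖η‖ ≠ ‖-(x ^ 2)‖ := by rw [norm_neg]; exact (ne_of_lt hlt).symm
    have hkey : ‖η - x ^ 2‖ = (p:ℝ) ^ (-((2*m+1 : ℕ) : ℤ)) := by
      rw [sub_eq_add_neg, PadicInt.norm_add_eq_max_of_ne hne, norm_neg,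
        max_eq_left (le_of_lt hlt), hηnorm]
      first
      | (congr 1; push_cast; ring)
      | congr 1
    rw [hkey, inner_integral μ hμ (2*m+1), if_neg (by omega)]
    push_cast
    ring
  rw [integral_locally_const μ hμ (m+1) _
    (fun v => (if v ≤ m then 2*(v:ℝ)+1 else 2*(m:ℝ)+2) * (1 - (p:ℝ)⁻¹)) hSph hBall]
  have hsum : ∀ v ∈ Finset.range (m+1),
      (if v ≤ m then 2*(v:ℝ)+1 else 2*(m:ℝ)+2) * (1 - (p:ℝ)⁻¹)
          * ((p:ℝ) ^ (-(v:ℤ)) - (p:ℝ) ^ (-(v:ℤ) - 1))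
        = ((2*(v:ℝ)+1)*(1-q)) * (q^v - q^(v+1)) := by
    intro v hv
    rw [if_pos (by simp at hv; omega), hqv v]
    have : (p:ℝ) ^ (-(v:ℤ) - 1) = q ^ (v+1) := by
      rw [show (-(v:ℤ) - 1) = -((v+1 : ℕ) : ℤ) by push_cast; ring, hqv (v+1)]
    rw [this, hq]
  rw [Finset.sum_congr rfl hsum]
  have hNterm : (if m+1 ≤ m then 2*((m+1:ℕ):ℝ)+1 else 2*(m:ℝ)+2) * (1 - (p:ℝ)⁻¹)
      * (p:ℝ) ^ (-((m+1 : ℕ):ℤ)) = ((2*(m:ℝ)+2)*(1-q)) * q^(m+1) := by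
    rw [if_neg (by omega), hqv (m+1), hq]
  rw [hNterm, alg q m]
  have hq1 : (1:ℝ) + q ≠ 0 := by
    have : (0:ℝ) ≤ q := by rw [hq]; positivity
    linarith
  rw [show (1 + (p:ℝ)⁻¹) = 1 + q from rfl, inv_mul_cancel_left₀ hq1]
  congr 1
  rw [show -((m:ℤ) + 1) = -((m+1 : ℕ) : ℤ) by push_cast; ring, hqv (m+1)]
end
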